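/- arXiv:1812.02099 — 2 statements merged into one kernel-verified Lean document; each statement's English description precedes it below -/
import Mathlib

section
/- Let C be a maximum class of VC dimension d over X and D ⊆ C a maximum class of VC dimension d-1 over X. Then every concept c ∈ C \ D is the source of a unique incomplete cube for (C, D). Moreover, if r' : D → X̄(D) is a representation map for D and r : C → X̄(C) extends r' by setting r(c) = supp(Q) for each c ∈ C \ D, where Q is the unique incomplete cube with source c, then r is a representation map for C. -/
variable {X : Type} [Fintype X] [DecidableEq X]

/-- Hamming distance between two subsets of `X` (size of symmetric difference). -/
def hdist (c c' : Finset X) : ℕ := ((c \ c') ∪ (c' \ c)).card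

/-- The restriction `C|Y = {c ∩ Y : c ∈ C}`. -/
def restrictTo (C : Finset (Finset X)) (Y : Finset X) : Finset (Finset X) :=
  C.image (· ∩ Y)

/-- `Y` is shattered by `C`, i.e. `C|Y = 2^Y`. -/
def Shatters (C : Finset (Finset X)) (Y : Finset X) : Prop :=
  ∀ s ∈ Y.powerset, ∃ c ∈ C, c ∩ Y = s

instance (C : Finset (Finset X)) : DecidablePred (Shatters C) := fun _ => by
  unfold Shatters; infer_instance

/-- The family `X̄(C)` of all sets shattered by `C`. -/
def shatteredSets (C : Finset (Finset X)) : Finset (Finset X) :=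
  Finset.univ.filter (Shatters C)

/-- The VC dimension of `C`: maximum size of a shattered set. -/
def vcDim (C : Finset (Finset X)) : ℕ := (shatteredSets C).sup Finset.card

/-- `C` is ample: `|C| = |X̄(C)|`. -/
def IsAmple (C : Finset (Finset X)) : Prop := C.card = (shatteredSets C).card

/-- `C` is a maximum class of VC dimension `d`. -/
def IsMaximumClass (C : Finset (Finset X)) (d : ℕ) : Prop :=
  vcDim C = d ∧ C.card = ∑ i ∈ Finset.range (d + 1), (Fintype.card X).choose i

/-- `B` is a cube with support `Y`: `B = {t ∪ s : s ⊆ Y}` for some `t ⊆ X \ Y`. -/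
def IsCubeS (B : Finset (Finset X)) (Y : Finset X) : Prop :=
  ∃ t : Finset X, t ∩ Y = ∅ ∧ B = Y.powerset.image (fun s => t ∪ s)

/-- `B` is a cube. -/
def IsCube (B : Finset (Finset X)) : Prop := ∃ Y, IsCubeS B Y

/-- `B` is a cube of `C`: a cube contained in `C`. -/
def IsCubeOf (C B : Finset (Finset X)) : Prop := B ⊆ C ∧ IsCube B

/-- `B` is a maximal cube of `C` (maximal under inclusion among cubes of `C`). -/
def IsMaximalCubeOf (C B : Finset (Finset X)) : Prop :=
  IsCubeOf C B ∧ ∀ B', IsCubeOf C B' → B ⊆ B' → B = B'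

/-- `c` is a corner of `C`: a concept of `C` belonging to a unique maximal cube of `C`. -/
def IsCornerOf (C : Finset (Finset X)) (c : Finset X) : Prop :=
  c ∈ C ∧ ∃! B, IsMaximalCubeOf C B ∧ c ∈ B

/-- The one-inclusion graph `G(C)`. -/
def oneInclusionGraph (C : Finset (Finset X)) : SimpleGraph {c : Finset X // c ∈ C} where
  Adj c c' := hdist c.1 c'.1 = 1
  symm := by
    constructor
    intro a b h
    simpa [hdist, Finset.union_comm] using h
  loopless := by
    constructor
    intro a h
    simp [hdist] at h

/-- `C` is isometric: `G(C)` is connected and graph distances equal Hamming distances. -/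
def IsIsometric (C : Finset (Finset X)) : Prop :=
  (oneInclusionGraph C).Connected ∧
  ∀ c c' : {c : Finset X // c ∈ C}, (oneInclusionGraph C).dist c c' = hdist c.1 c'.1

/-- `C` is weakly isometric: `G(C)` is connected and graph distances equal Hamming
distances for pairs at Hamming distance at most 2. -/
def IsWeaklyIsometric (C : Finset (Finset X)) : Prop :=
  (oneInclusionGraph C).Connected ∧
  ∀ c c' : {c : Finset X // c ∈ C}, hdist c.1 c'.1 ≤ 2 →
    (oneInclusionGraph C).dist c c' = hdist c.1 c'.1

/-- A list of concepts is a corner peeling if it has no duplicates and each element is a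
corner of the corresponding level set. -/
def IsCornerPeeling (l : List (Finset X)) : Prop :=
  l.Nodup ∧ ∀ i (h : i < l.length), IsCornerOf ((l.take (i + 1)).toFinset) (l.get ⟨i, h⟩)

/-- `C` is dismantlable: it admits a corner peeling ordering of all its concepts. -/
def Dismantlable (C : Finset (Finset X)) : Prop :=
  ∃ l : List (Finset X), l.toFinset = C ∧ IsCornerPeeling l

/-- Non-clashing condition for a map `r`. -/
def NonClashing (C : Finset (Finset X)) (r : Finset X → Finset X) : Prop :=
  ∀ c ∈ C, ∀ c' ∈ C, c ≠ c' → c ∩ (r c ∪ r c') ≠ c' ∩ (r c ∪ r c')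

/-- `r` is a representation map for `C`: a non-clashing bijection from `C` onto `X̄(C)`. -/
def IsRepMap (C : Finset (Finset X)) (r : Finset X → Finset X) : Prop :=
  (∀ c ∈ C, r c ∈ shatteredSets C) ∧
  Set.InjOn r ↑C ∧
  (∀ Y ∈ shatteredSets C, ∃ c ∈ C, r c = Y) ∧
  NonClashing C r

/-- `C` admits an unlabeled sample compression scheme of size `k`. -/
def HasUSCS (C : Finset (Finset X)) (k : ℕ) : Prop :=
  ∃ (α : Finset X → Finset X → Finset X) (β : Finset X → Finset X),
    ∀ (Y : Finset X), ∀ c ∈ C,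
      α Y (c ∩ Y) ⊆ Y ∧ (α Y (c ∩ Y)).card ≤ k ∧
      β (α Y (c ∩ Y)) ∈ C ∧ β (α Y (c ∩ Y)) ∩ Y = c ∩ Y

/-- The cube of `2^X` with support `Y` containing `c`. -/
def cubeAt (c Y : Finset X) : Finset (Finset X) :=
  Y.powerset.image (fun s => (c \ Y) ∪ s)

/-- Condition (C1): for every `c ∈ C`, the cube with support `r c` containing `c`
is a cube of `C`. -/
def CondC1 (C : Finset (Finset X)) (r : Finset X → Finset X) : Prop :=
  ∀ c ∈ C, cubeAt c (r c) ⊆ C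

/-- Condition (C2): every cube of `C` has a unique concept `c` with `r c ∩ supp B = ∅`. -/
def CondC2 (C : Finset (Finset X)) (r : Finset X → Finset X) : Prop :=
  ∀ B Y, B ⊆ C → IsCubeS B Y → ∃! c, c ∈ B ∧ r c ∩ Y = ∅

/-- The facet of the cross-polytope corresponding to a subset `c ⊆ X`:
`+x ∈ σ_c` iff `x ∈ c` (where `+x = Sum.inl x` and `-x = Sum.inr x`). -/
def facet (c : Finset X) : Finset (X ⊕ X) :=
  c.image Sum.inl ∪ (Finset.univ \ c).image Sum.inr

/-- A list of facets of the cross-polytope is a partial shelling. -/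
def IsPartialShelling (L : List (Finset (X ⊕ X))) : Prop :=
  L.Nodup ∧ ∀ i j, i < j → j < L.length →
    ∃ k < j, ((L.getD k ∅) ∩ (L.getD j ∅)).card = Fintype.card X - 1 ∧
      (L.getD i ∅) ∩ (L.getD j ∅) ⊆ (L.getD k ∅) ∩ (L.getD j ∅)

/-- `Q` is an incomplete cube for `(C, D)` with support `σ`: a cube of `C` whose
support `σ` is a missed simplex (shattered by `C` but not by `D`). -/
def IsIncompleteCube (C D Q : Finset (Finset X)) (σ : Finset X) : Prop :=
  Q ⊆ C ∧ IsCubeS Q σ ∧ Shatters C σ ∧ ¬ Shatters D σ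

/-- `c` is the source of the incomplete cube `Q` with support `σ`:
`c ∈ Q` and `c ∩ σ ∉ D|σ`. -/
def IsSource (D Q : Finset (Finset X)) (σ : Finset X) (c : Finset X) : Prop :=
  c ∈ Q ∧ c ∩ σ ∉ restrictTo D σ

/-- The restriction `C_x = C|(X \ {x})`, with concepts viewed as subsets of `X`
avoiding `x`. -/
def restrictX (C : Finset (Finset X)) (x : X) : Finset (Finset X) :=
  C.image (·.erase x)

/-- The reduction `C^x = {c ⊆ X \ {x} : c ∈ C and c ∪ {x} ∈ C}`. -/
def reduction (C : Finset (Finset X)) (x : X) : Finset (Finset X) :=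
  C.filter (fun c => x ∉ c ∧ insert x c ∈ C)

/-- The interval `B(c,c') = {t : d(c,t) + d(t,c') = d(c,c')}`. -/
def interval (c c' : Finset X) : Finset (Finset X) :=
  Finset.univ.filter (fun t => hdist c t + hdist t c' = hdist c c')

/-- `C'` is convex in `C`. -/
def IsConvexIn (C C' : Finset (Finset X)) : Prop :=
  ∀ c ∈ C', ∀ c'' ∈ C', interval c c'' ∩ C ⊆ C'

/-- `C'` is locally convex in `C`. -/
def IsLocallyConvexIn (C C' : Finset (Finset X)) : Prop :=
  ∀ c ∈ C', ∀ c'' ∈ C', hdist c c'' = 2 → interval c c'' ∩ C ⊆ C'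

/-- `C` is a conditional antimatroid: contains `∅`, closed under intersection, and
every concept is generated by its extremal points. -/
def IsCondAntimatroid (C : Finset (Finset X)) : Prop :=
  ∅ ∈ C ∧ (∀ c ∈ C, ∀ c' ∈ C, c ∩ c' ∈ C) ∧
  ∀ c ∈ C, ∀ c' ∈ C, (c.filter (fun x => c.erase x ∈ C)) ⊆ c' → c ⊆ c'

/-! ### Auxiliary development for stmt_12 -/

set_option linter.unusedSectionVars false

open Finset hiding Shatters

section AuxDev

lemma shatters_iff' {C : Finset (Finset X)} {σ : Finset X} :
    Shatters C σ ↔ ∀ s ⊆ σ, ∃ c ∈ C, c ∩ σ = s := by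
  simp [Shatters, Finset.mem_powerset]

lemma shatters_iff_shatters {C : Finset (Finset X)} {σ : Finset X} :
    Shatters C σ ↔ C.Shatters σ := by
  constructor
  · intro h t ht
    obtain ⟨c, hc, hcs⟩ := shatters_iff'.1 h t ht
    exact ⟨c, hc, by rw [Finset.inter_comm]; exact hcs⟩
  · intro h
    rw [shatters_iff']
    intro s hs
    obtain ⟨u, hu, hus⟩ := h hs
    exact ⟨u, hu, by rw [Finset.inter_comm]; exact hus⟩

lemma shatters_subset_ground {C : Finset (Finset X)} {G σ : Finset X}
    (hC : ∀ c ∈ C, c ⊆ G) (h : Shatters C σ) : σ ⊆ G := by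
  obtain ⟨c, hc, hcs⟩ := shatters_iff'.1 h σ (subset_refl σ)
  exact (Finset.inter_eq_right.mp hcs).trans (hC c hc)

lemma shatters_mono {C C' : Finset (Finset X)} {σ : Finset X} (h : C ⊆ C')
    (hs : Shatters C σ) : Shatters C' σ := by
  rw [shatters_iff'] at *
  intro s hsub
  obtain ⟨c, hc, hcs⟩ := hs s hsub
  exact ⟨c, h hc, hcs⟩

lemma card_powerset_filter_le (G : Finset X) (d : ℕ) :
    ((G.powerset.filter (fun t => t.card ≤ d))).card
      = ∑ i ∈ Finset.range (d+1), G.card.choose i := by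
  have hset : G.powerset.filter (fun t => t.card ≤ d)
      = (Finset.range (d+1)).biUnion (fun i => G.powersetCard i) := by
    ext t
    simp only [mem_filter, mem_powerset, mem_biUnion, mem_range, mem_powersetCard,
      Nat.lt_succ_iff]
    constructor
    · rintro ⟨h1, h2⟩; exact ⟨t.card, h2, h1, rfl⟩
    · rintro ⟨i, hi, h1, rfl⟩; exact ⟨h1, hi⟩
  rw [hset, Finset.card_biUnion]
  · simp [Finset.card_powersetCard]
  · intro i _ j _ hij
    rw [Function.onFun, Finset.disjoint_left]
    intro t hti htj
    rw [mem_powersetCard] at hti htj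
    exact hij (hti.2 ▸ htj.2)

lemma pajor_ground {C : Finset (Finset X)} {G : Finset X} (hC : ∀ c ∈ C, c ⊆ G) :
    C.card ≤ (G.powerset.filter (Shatters C)).card := by
  refine le_trans (Finset.card_le_card_shatterer C) (Finset.card_le_card ?_)
  intro s hs
  rw [Finset.mem_shatterer] at hs
  have hs' : Shatters C s := shatters_iff_shatters.2 hs
  rw [Finset.mem_filter, Finset.mem_powerset]
  exact ⟨shatters_subset_ground hC hs', hs'⟩

/-- `C` is a "maximum class of VC dimension (at most) `d`" over ground set `G`. -/
def MaxOn (C : Finset (Finset X)) (G : Finset X) (d : ℕ) : Prop :=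
  (∀ c ∈ C, c ⊆ G) ∧ (∀ σ : Finset X, Shatters C σ → σ.card ≤ d) ∧
    C.card = ∑ i ∈ Finset.range (d+1), G.card.choose i

lemma card_le_sum_of_vc {C : Finset (Finset X)} {G : Finset X} {d : ℕ}
    (hG : ∀ c ∈ C, c ⊆ G) (hvc : ∀ σ : Finset X, Shatters C σ → σ.card ≤ d) :
    C.card ≤ ∑ i ∈ Finset.range (d+1), G.card.choose i := by
  rw [← card_powerset_filter_le]
  refine le_trans (pajor_ground hG) (Finset.card_le_card ?_)
  intro t ht
  rw [mem_filter] at *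
  exact ⟨ht.1, hvc t ht.2⟩

lemma MaxOn.shatters {C : Finset (Finset X)} {G : Finset X} {d : ℕ}
    (h : MaxOn C G d) {σ : Finset X} (hσG : σ ⊆ G) (hσ : σ.card ≤ d) : Shatters C σ := by
  have hsub : G.powerset.filter (Shatters C) ⊆ G.powerset.filter (fun t => t.card ≤ d) := by
    intro t ht
    rw [mem_filter] at *
    exact ⟨ht.1, h.2.1 t ht.2⟩
  have hcard : (G.powerset.filter (fun t => t.card ≤ d)).card
      ≤ (G.powerset.filter (Shatters C)).card := by
    rw [card_powerset_filter_le, ← h.2.2]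
    exact pajor_ground h.1
  have heq := Finset.eq_of_subset_of_card_le hsub hcard
  have hmem : σ ∈ G.powerset.filter (fun t => t.card ≤ d) := by
    rw [mem_filter, mem_powerset]; exact ⟨hσG, hσ⟩
  rw [← heq, mem_filter] at hmem
  exact hmem.2

lemma MaxOn.nonempty {C : Finset (Finset X)} {G : Finset X} {d : ℕ}
    (h : MaxOn C G d) : C.Nonempty := by
  rw [← Finset.card_pos, h.2.2]
  calc 0 < G.card.choose 0 := by simp
    _ ≤ _ := Finset.single_le_sum (f := fun i => G.card.choose i)
        (fun i _ => Nat.zero_le _) (Finset.mem_range.2 (Nat.succ_pos d))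

/-! #### Restriction and reduction preserve maximumness -/

lemma erase_inter_of_not_mem {c σ : Finset X} {x : X} (hx : x ∉ σ) :
    (c.erase x) ∩ σ = c ∩ σ := by
  ext a
  simp only [Finset.mem_inter, Finset.mem_erase]
  constructor
  · rintro ⟨⟨_, ha⟩, hσ⟩; exact ⟨ha, hσ⟩
  · rintro ⟨ha, hσ⟩; exact ⟨⟨fun h => hx (h ▸ hσ), ha⟩, hσ⟩

lemma shatters_restrictX {C : Finset (Finset X)} {x : X} {σ : Finset X} (hx : x ∉ σ)
    (h : Shatters (restrictX C x) σ) : Shatters C σ := by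
  rw [shatters_iff'] at *
  intro s hs
  obtain ⟨c', hc', hcs⟩ := h s hs
  obtain ⟨c, hc, rfl⟩ := Finset.mem_image.1 hc'
  exact ⟨c, hc, by rw [← erase_inter_of_not_mem hx]; exact hcs⟩

lemma shatters_reduction {C : Finset (Finset X)} {x : X} {σ : Finset X} (hx : x ∉ σ)
    (h : Shatters (reduction C x) σ) : Shatters C (insert x σ) := by
  rw [shatters_iff'] at *
  intro s hs
  obtain ⟨c, hc, hcs⟩ := h (s.erase x) (fun a ha => by
    rcases Finset.mem_insert.1 (hs (Finset.mem_of_mem_erase ha)) with h' | h'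
    · exact absurd h' (Finset.ne_of_mem_erase ha)
    · exact h')
  rw [reduction, Finset.mem_filter] at hc
  obtain ⟨hcC, hxc, hixc⟩ := hc
  by_cases hxs : x ∈ s
  · refine ⟨insert x c, hixc, ?_⟩
    rw [Finset.insert_inter_of_mem (Finset.mem_insert_self x σ),
      Finset.inter_insert_of_notMem hxc, hcs, Finset.insert_erase hxs]
  · refine ⟨c, hcC, ?_⟩
    rw [Finset.inter_insert_of_notMem hxc, hcs, Finset.erase_eq_of_notMem hxs]

lemma restrictX_card_add_reduction_card (C : Finset (Finset X)) (x : X) :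
    (restrictX C x).card + (reduction C x).card = C.card := by
  classical
  set C0 := C.filter (fun c => x ∉ c) with hC0
  set C1 := C.filter (fun c => x ∈ c) with hC1
  set E1 := C1.image (fun c => c.erase x) with hE1
  have hrX : restrictX C x = C0 ∪ E1 := by
    ext t
    simp only [restrictX, Finset.mem_image, Finset.mem_union, hC0, hC1, hE1,
      Finset.mem_filter, Finset.mem_image]
    constructor
    · rintro ⟨c, hc, rfl⟩
      by_cases hxc : x ∈ c
      · exact Or.inr ⟨c, ⟨hc, hxc⟩, rfl⟩
      · exact Or.inl ⟨by rwa [Finset.erase_eq_of_notMem hxc], by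
          rw [Finset.erase_eq_of_notMem hxc]; exact hxc⟩
    · rintro (⟨ht, hxt⟩ | ⟨c, ⟨hc, _⟩, rfl⟩)
      · exact ⟨t, ht, Finset.erase_eq_of_notMem hxt⟩
      · exact ⟨c, hc, rfl⟩
  have hred : reduction C x = C0 ∩ E1 := by
    ext c
    simp only [reduction, Finset.mem_filter, Finset.mem_inter, hC0, hC1, hE1,
      Finset.mem_filter, Finset.mem_image]
    constructor
    · rintro ⟨hc, hxc, hic⟩
      exact ⟨⟨hc, hxc⟩, insert x c, ⟨hic, Finset.mem_insert_self x c⟩,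
        Finset.erase_insert hxc⟩
    · rintro ⟨⟨hc, hxc⟩, b, ⟨hb, hxb⟩, rfl⟩
      refine ⟨hc, hxc, ?_⟩
      rwa [Finset.insert_erase hxb]
  have hE1card : E1.card = C1.card := by
    refine Finset.card_image_of_injOn ?_
    intro a ha b hb hab
    rw [Finset.mem_coe, hC1, Finset.mem_filter] at ha hb
    rw [← Finset.insert_erase ha.2, show a.erase x = b.erase x from hab, Finset.insert_erase hb.2]
  have hsplit : C1.card + C0.card = C.card :=
    Finset.card_filter_add_card_filter_not (p := fun c => x ∈ c)
  rw [hrX, hred]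
  have := Finset.card_union_add_card_inter C0 E1
  omega

lemma sum_choose_pascal (n d : ℕ) :
    ∑ i ∈ Finset.range (d+1), (n+1).choose i
      = ∑ i ∈ Finset.range (d+1), n.choose i + ∑ i ∈ Finset.range d, n.choose i := by
  induction d with
  | zero => simp
  | succ d ih =>
      rw [Finset.sum_range_succ, ih, Nat.choose_succ_succ,
        Finset.sum_range_succ (f := fun i => n.choose i) (n := d+1),
        Finset.sum_range_succ (f := fun i => n.choose i) (n := d)]
      simp only [Nat.succ_eq_add_one]
      omega

lemma maxon_core {C : Finset (Finset X)} {G : Finset X} {d : ℕ}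
    (h : MaxOn C G d) {x : X} (hx : x ∈ G) :
    (restrictX C x).card = ∑ i ∈ Finset.range (d+1), (G.erase x).card.choose i ∧
    (reduction C x).card = ∑ i ∈ Finset.range d, (G.erase x).card.choose i := by
  have hGr : ∀ c ∈ restrictX C x, c ⊆ G.erase x := by
    intro c hc
    obtain ⟨b, hb, rfl⟩ := Finset.mem_image.1 hc
    exact fun a ha => Finset.mem_erase.2 ⟨Finset.ne_of_mem_erase ha,
      h.1 b hb (Finset.mem_of_mem_erase ha)⟩
  have hGred : ∀ c ∈ reduction C x, c ⊆ G.erase x := by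
    intro c hc
    rw [reduction, Finset.mem_filter] at hc
    exact fun a ha => Finset.mem_erase.2 ⟨fun he => hc.2.1 (he ▸ ha), h.1 c hc.1 ha⟩
  have ha : (restrictX C x).card ≤ ∑ i ∈ Finset.range (d+1), (G.erase x).card.choose i := by
    refine card_le_sum_of_vc hGr ?_
    intro σ hσ
    have hxσ : x ∉ σ := fun hmem =>
      (Finset.mem_erase.1 (shatters_subset_ground hGr hσ hmem)).1 rfl
    exact h.2.1 σ (shatters_restrictX hxσ hσ)
  have hb : (reduction C x).card ≤ ∑ i ∈ Finset.range d, (G.erase x).card.choose i := by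
    rcases Nat.eq_zero_or_pos d with hd | hd
    · subst hd
      simp only [Finset.range_zero, Finset.sum_empty, Nat.le_zero, Finset.card_eq_zero]
      by_contra hne
      obtain ⟨c, hc⟩ := Finset.nonempty_of_ne_empty hne
      have hsh : Shatters (reduction C x) ∅ := by
        rw [shatters_iff']
        intro s hs
        rw [Finset.subset_empty.1 hs]
        exact ⟨c, hc, Finset.inter_empty c⟩
      have := h.2.1 {x} (shatters_reduction (Finset.notMem_empty x) hsh)
      simp at this
    · obtain ⟨e, rfl⟩ := Nat.exists_eq_add_of_le hd
      have : ∀ σ : Finset X, Shatters (reduction C x) σ → σ.card ≤ e := by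
        intro σ hσ
        have hxσ : x ∉ σ := fun hmem =>
          (Finset.mem_erase.1 (shatters_subset_ground hGred hσ hmem)).1 rfl
        have := h.2.1 _ (shatters_reduction hxσ hσ)
        rw [Finset.card_insert_of_notMem hxσ] at this
        omega
      have := card_le_sum_of_vc hGred this
      simpa [Nat.add_comm 1 e] using this
  have hsum : (restrictX C x).card + (reduction C x).card
      = ∑ i ∈ Finset.range (d+1), (G.erase x).card.choose i
        + ∑ i ∈ Finset.range d, (G.erase x).card.choose i := by
    have hGcard : G.card = (G.erase x).card + 1 := by
      rw [Finset.card_erase_of_mem hx]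
      have := Finset.card_pos.2 ⟨x, hx⟩
      omega
    rw [restrictX_card_add_reduction_card, h.2.2, hGcard, sum_choose_pascal]
  omega

lemma MaxOn.restrX {C : Finset (Finset X)} {G : Finset X} {d : ℕ}
    (h : MaxOn C G d) {x : X} (hx : x ∈ G) : MaxOn (restrictX C x) (G.erase x) d := by
  refine ⟨?_, ?_, (maxon_core h hx).1⟩
  · intro c hc
    obtain ⟨b, hb, rfl⟩ := Finset.mem_image.1 hc
    exact fun a ha => Finset.mem_erase.2 ⟨Finset.ne_of_mem_erase ha,
      h.1 b hb (Finset.mem_of_mem_erase ha)⟩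
  · intro σ hσ
    have hGr : ∀ c ∈ restrictX C x, c ⊆ G.erase x := by
      intro c hc
      obtain ⟨b, hb, rfl⟩ := Finset.mem_image.1 hc
      exact fun a ha => Finset.mem_erase.2 ⟨Finset.ne_of_mem_erase ha,
        h.1 b hb (Finset.mem_of_mem_erase ha)⟩
    have hxσ : x ∉ σ := fun hmem =>
      (Finset.mem_erase.1 (shatters_subset_ground hGr hσ hmem)).1 rfl
    exact h.2.1 σ (shatters_restrictX hxσ hσ)

lemma MaxOn.reduc {C : Finset (Finset X)} {G : Finset X} {d : ℕ}
    (h : MaxOn C G (d+1)) {x : X} (hx : x ∈ G) : MaxOn (reduction C x) (G.erase x) d := by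
  have hGred : ∀ c ∈ reduction C x, c ⊆ G.erase x := by
    intro c hc
    rw [reduction, Finset.mem_filter] at hc
    exact fun a ha => Finset.mem_erase.2 ⟨fun he => hc.2.1 (he ▸ ha), h.1 c hc.1 ha⟩
  refine ⟨hGred, ?_, by simpa using (maxon_core h hx).2⟩
  intro σ hσ
  have hxσ : x ∉ σ := fun hmem =>
    (Finset.mem_erase.1 (shatters_subset_ground hGred hσ hmem)).1 rfl
  have := h.2.1 _ (shatters_reduction hxσ hσ)
  rw [Finset.card_insert_of_notMem hxσ] at this
  omega

/-! #### Multiple restriction; unique missing trace -/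

lemma mem_restrictTo {D : Finset (Finset X)} {σ s : Finset X} :
    s ∈ restrictTo D σ ↔ ∃ t ∈ D, t ∩ σ = s := by
  simp [restrictTo]

lemma restrictTo_restrictX {D : Finset (Finset X)} {x : X} {σ : Finset X} (hx : x ∉ σ) :
    restrictTo (restrictX D x) σ = restrictTo D σ := by
  ext s
  simp only [mem_restrictTo, restrictX, Finset.mem_image]
  constructor
  · rintro ⟨t, ⟨c, hc, rfl⟩, rfl⟩
    exact ⟨c, hc, (erase_inter_of_not_mem hx).symm⟩
  · rintro ⟨c, hc, rfl⟩
    exact ⟨c.erase x, ⟨c, hc, rfl⟩, erase_inter_of_not_mem hx⟩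

lemma MaxOn.restrictTo_max {D : Finset (Finset X)} {e : ℕ} :
    ∀ (k : ℕ) (G σ : Finset X), G.card = σ.card + k → MaxOn D G e → σ ⊆ G →
      MaxOn (restrictTo D σ) σ e := by
  intro k
  induction k generalizing D with
  | zero =>
      intro G σ hcard h hσG
      have hσ : σ = G := Finset.eq_of_subset_of_card_le hσG (by omega)
      subst hσ
      have : restrictTo D σ = D := by
        ext t
        rw [mem_restrictTo]
        constructor
        · rintro ⟨c, hc, rfl⟩
          rwa [Finset.inter_eq_left.2 (h.1 c hc)]
        · intro ht
          exact ⟨t, ht, Finset.inter_eq_left.2 (h.1 t ht)⟩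
      rw [this]
      exact h
  | succ k ih =>
      intro G σ hcard h hσG
      have hss : σ ⊂ G := HasSubset.Subset.ssubset_of_ne hσG (by
        intro he; rw [he] at hcard; omega)
      obtain ⟨x, hxG, hxσ⟩ := Finset.exists_of_ssubset hss
      rw [← restrictTo_restrictX (D := D) hxσ]
      refine ih (G.erase x) σ ?_ (h.restrX hxG) (Finset.subset_erase.2 ⟨hσG, hxσ⟩)
      rw [Finset.card_erase_of_mem hxG]
      omega

lemma exists_unique_missing {D : Finset (Finset X)} {G σ : Finset X} {e : ℕ}
    (hD : MaxOn D G e) (hσG : σ ⊆ G) (hcard : σ.card = e + 1) :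
    ∃! s, s ⊆ σ ∧ s ∉ restrictTo D σ := by
  have hR : MaxOn (restrictTo D σ) σ e := by
    refine MaxOn.restrictTo_max (G.card - σ.card) G σ ?_ hD hσG
    have := Finset.card_le_card hσG
    omega
  have hRsub : restrictTo D σ ⊆ σ.powerset := by
    intro s hs
    obtain ⟨t, _, rfl⟩ := mem_restrictTo.1 hs
    exact Finset.mem_powerset.2 Finset.inter_subset_right
  have hRcard : (restrictTo D σ).card = 2 ^ (e + 1) - 1 := by
    rw [hR.2.2, hcard]
    have h2 := Nat.sum_range_choose (e + 1)
    rw [Finset.sum_range_succ] at h2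
    simp only [Nat.choose_self] at h2
    omega
  have hone : (σ.powerset \ restrictTo D σ).card = 1 := by
    rw [Finset.card_sdiff_of_subset hRsub, Finset.card_powerset, hRcard, hcard]
    have : 0 < 2 ^ (e + 1) := Nat.pow_pos (by norm_num)
    omega
  obtain ⟨s, hs⟩ := Finset.card_eq_one.1 hone
  refine ⟨s, ?_, ?_⟩
  · have : s ∈ σ.powerset \ restrictTo D σ := hs ▸ Finset.mem_singleton_self s
    rw [Finset.mem_sdiff, Finset.mem_powerset] at this
    exact this
  · intro s' hs'
    have : s' ∈ σ.powerset \ restrictTo D σ := by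
      rw [Finset.mem_sdiff, Finset.mem_powerset]
      exact hs'
    rw [hs, Finset.mem_singleton] at this
    exact this

/-! #### Cubes -/

lemma mem_cubeAt {b c σ : Finset X} :
    b ∈ cubeAt c σ ↔ ∃ s ⊆ σ, b = (c \ σ) ∪ s := by
  simp only [cubeAt, Finset.mem_image, Finset.mem_powerset]
  constructor
  · rintro ⟨s, hs, rfl⟩; exact ⟨s, hs, rfl⟩
  · rintro ⟨s, hs, rfl⟩; exact ⟨s, hs, rfl⟩

lemma self_mem_cubeAt (c σ : Finset X) : c ∈ cubeAt c σ :=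
  mem_cubeAt.2 ⟨c ∩ σ, Finset.inter_subset_right, by
    rw [Finset.sdiff_union_inter]⟩

lemma base_of_mem_cubeAt {b c σ : Finset X} (h : b ∈ cubeAt c σ) : b \ σ = c \ σ := by
  obtain ⟨s, hs, rfl⟩ := mem_cubeAt.1 h
  rw [Finset.union_sdiff_distrib, Finset.sdiff_idem,
    Finset.sdiff_eq_empty_iff_subset.2 hs, Finset.union_empty]

lemma inter_of_mem_cubeAt {c σ s : Finset X} (hs : s ⊆ σ) :
    ((c \ σ) ∪ s) ∩ σ = s := by
  rw [Finset.union_inter_distrib_right, Finset.sdiff_inter_self,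
    Finset.empty_union, Finset.inter_eq_left.2 hs]

lemma cubeAt_congr {b c σ : Finset X} (h : b \ σ = c \ σ) : cubeAt b σ = cubeAt c σ := by
  unfold cubeAt
  rw [h]

lemma mem_cubeAt_iff_base {b c σ : Finset X} : b ∈ cubeAt c σ ↔ b \ σ = c \ σ := by
  constructor
  · exact base_of_mem_cubeAt
  · intro h
    exact mem_cubeAt.2 ⟨b ∩ σ, Finset.inter_subset_right, by rw [← h, Finset.sdiff_union_inter]⟩

lemma eq_of_mem_cubeAt_inter_eq {b b' c σ : Finset X} (hb : b ∈ cubeAt c σ)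
    (hb' : b' ∈ cubeAt c σ) (h : b ∩ σ = b' ∩ σ) : b = b' := by
  have h1 := base_of_mem_cubeAt hb
  have h2 := base_of_mem_cubeAt hb'
  calc b = b \ σ ∪ b ∩ σ := by rw [Finset.sdiff_union_inter]
    _ = b' \ σ ∪ b' ∩ σ := by rw [h1, h2, h]
    _ = b' := by rw [Finset.sdiff_union_inter]

lemma isCubeS_cubeAt (c σ : Finset X) : IsCubeS (cubeAt c σ) σ :=
  ⟨c \ σ, Finset.sdiff_inter_self σ c, rfl⟩

lemma IsCubeS.eq_cubeAt {B : Finset (Finset X)} {σ c : Finset X}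
    (h : IsCubeS B σ) (hc : c ∈ B) : B = cubeAt c σ := by
  obtain ⟨t, ht, rfl⟩ := h
  have htσ : t \ σ = t := by
    rw [Finset.sdiff_eq_self_iff_disjoint, Finset.disjoint_iff_inter_eq_empty]
    exact ht
  obtain ⟨s, hs, rfl⟩ := Finset.mem_image.1 hc
  rw [Finset.mem_powerset] at hs
  have : (t ∪ s) \ σ = t := by
    rw [Finset.union_sdiff_distrib, htσ, Finset.sdiff_eq_empty_iff_subset.2 hs,
      Finset.union_empty]
  unfold cubeAt
  rw [this]

lemma union_insert_erase {A s : Finset X} {x : X} (hxs : x ∈ s) :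
    A ∪ s = insert x (A ∪ s.erase x) := by
  ext a
  simp only [Finset.mem_union, Finset.mem_insert, Finset.mem_erase]
  by_cases hax : a = x
  · subst hax; tauto
  · tauto

lemma cubeAt_empty (c : Finset X) : cubeAt c ∅ = {c} := by
  simp [cubeAt]

lemma cube_exists : ∀ (d : ℕ) (C : Finset (Finset X)) (G σ : Finset X),
    MaxOn C G d → σ ⊆ G → σ.card = d → ∃ c, cubeAt c σ ⊆ C := by
  intro d
  induction d with
  | zero =>
      intro C G σ hC hσG hσ
      obtain ⟨c, hc⟩ := hC.nonempty
      rw [Finset.card_eq_zero.1 hσ]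
      exact ⟨c, by rw [cubeAt_empty]; exact Finset.singleton_subset_iff.2 hc⟩
  | succ d ih =>
      intro C G σ hC hσG hσ
      obtain ⟨x, hxσ⟩ := Finset.card_pos.1 (by omega : 0 < σ.card)
      have hxG : x ∈ G := hσG hxσ
      have hred : MaxOn (reduction C x) (G.erase x) d := hC.reduc hxG
      have hσ' : (σ.erase x) ⊆ G.erase x := Finset.erase_subset_erase x hσG
      have hσ'c : (σ.erase x).card = d := by
        rw [Finset.card_erase_of_mem hxσ, hσ]
        omega
      obtain ⟨cb, hcb⟩ := ih (reduction C x) (G.erase x) (σ.erase x) hred hσ' hσ'c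
      -- members of the reduced cube avoid x
      have hxcb : x ∉ cb := by
        have : cb ∈ reduction C x := hcb (self_mem_cubeAt _ _)
        rw [reduction, Finset.mem_filter] at this
        exact this.2.1
      have hbase : cb \ σ = cb \ σ.erase x := by
        ext a
        simp only [Finset.mem_sdiff, Finset.mem_erase]
        constructor
        · rintro ⟨ha, hna⟩; exact ⟨ha, fun h => hna h.2⟩
        · rintro ⟨ha, hna⟩
          refine ⟨ha, fun h => hna ⟨fun he => hxcb (he ▸ ha), h⟩⟩
      refine ⟨cb, ?_⟩
      intro b hb
      obtain ⟨s, hs, rfl⟩ := mem_cubeAt.1 hb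
      set s' := s.erase x with hs'
      have hs'sub : s' ⊆ σ.erase x := Finset.erase_subset_erase x hs
      have hb' : (cb \ σ.erase x) ∪ s' ∈ cubeAt cb (σ.erase x) :=
        mem_cubeAt.2 ⟨s', hs'sub, rfl⟩
      have hb'red := hcb hb'
      rw [reduction, Finset.mem_filter] at hb'red
      obtain ⟨hb'C, hxb', hib'⟩ := hb'red
      by_cases hxs : x ∈ s
      · have heq : (cb \ σ) ∪ s = insert x ((cb \ σ.erase x) ∪ s') := by
          rw [hbase, hs']
          exact union_insert_erase hxs
        rw [heq]
        exact hib'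
      · have : (cb \ σ) ∪ s = (cb \ σ.erase x) ∪ s' := by
          rw [hbase, hs', Finset.erase_eq_of_notMem hxs]
        rw [this]
        exact hb'C

lemma cube_unique : ∀ (d : ℕ) (C : Finset (Finset X)) (G σ c c' : Finset X),
    MaxOn C G d → σ ⊆ G → σ.card = d → cubeAt c σ ⊆ C → cubeAt c' σ ⊆ C →
    c \ σ = c' \ σ := by
  intro d
  induction d with
  | zero =>
      intro C G σ c c' hC hσG hσ hc hc'
      rw [Finset.card_eq_zero.1 hσ] at hc hc' ⊢
      rw [cubeAt_empty] at hc hc'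
      have h1 := Finset.singleton_subset_iff.1 hc
      have h2 := Finset.singleton_subset_iff.1 hc'
      have hcard : C.card = 1 := by
        rw [hC.2.2]; simp
      obtain ⟨c₀, hc₀⟩ := Finset.card_eq_one.1 hcard
      rw [hc₀, Finset.mem_singleton] at h1 h2
      rw [h1, h2]
  | succ d ih =>
      intro C G σ c c' hC hσG hσ hc hc'
      obtain ⟨x, hxσ⟩ := Finset.card_pos.1 (by omega : 0 < σ.card)
      have hxG : x ∈ G := hσG hxσ
      have hred : MaxOn (reduction C x) (G.erase x) d := hC.reduc hxG
      have hσ' : (σ.erase x) ⊆ G.erase x := Finset.erase_subset_erase x hσG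
      have hσ'c : (σ.erase x).card = d := by
        rw [Finset.card_erase_of_mem hxσ, hσ]
        omega
      have hdown : ∀ b : Finset X, cubeAt b σ ⊆ C →
          cubeAt (b \ σ) (σ.erase x) ⊆ reduction C x := by
        intro b hb t ht
        obtain ⟨s, hs, rfl⟩ := mem_cubeAt.1 ht
        have hbb : (b \ σ) \ σ.erase x = b \ σ := by
          rw [Finset.sdiff_eq_self_iff_disjoint]
          rw [Finset.disjoint_left]
          intro a ha haσ'
          exact (Finset.mem_sdiff.1 ha).2 (Finset.mem_of_mem_erase haσ')
        rw [hbb]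
        have hsσ : s ⊆ σ := hs.trans (Finset.erase_subset x σ)
        have hmem1 : (b \ σ) ∪ s ∈ cubeAt b σ := mem_cubeAt.2 ⟨s, hsσ, rfl⟩
        have hmem2 : (b \ σ) ∪ insert x s ∈ cubeAt b σ :=
          mem_cubeAt.2 ⟨insert x s, Finset.insert_subset hxσ hsσ, rfl⟩
        rw [reduction, Finset.mem_filter]
        refine ⟨hb hmem1, ?_, ?_⟩
        · rw [Finset.mem_union, Finset.mem_sdiff]
          rintro (⟨_, hn⟩ | hxs)
          · exact hn hxσ
          · exact (Finset.mem_erase.1 (hs hxs)).1 rfl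
        · rw [← Finset.union_insert]
          exact hb hmem2
      have h1 := hdown c hc
      have h2 := hdown c' hc'
      have := ih (reduction C x) (G.erase x) (σ.erase x) (c \ σ) (c' \ σ)
        hred hσ' hσ'c h1 h2
      have hbb : ∀ b : Finset X, (b \ σ) \ σ.erase x = b \ σ := by
        intro b
        rw [Finset.sdiff_eq_self_iff_disjoint, Finset.disjoint_left]
        intro a ha haσ'
        exact (Finset.mem_sdiff.1 ha).2 (Finset.mem_of_mem_erase haσ')
      rw [hbb c, hbb c'] at this
      exact this

/-- `c` is the source of the (unique) `σ`-cube of `C`, with trace missing from `D|σ`. -/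
def IsSrcOf (C D : Finset (Finset X)) (σ c : Finset X) : Prop :=
  cubeAt c σ ⊆ C ∧ c ∩ σ ∉ restrictTo D σ

instance (C D : Finset (Finset X)) (σ c : Finset X) : Decidable (IsSrcOf C D σ c) := by
  unfold IsSrcOf; infer_instance

lemma IsSrcOf.mem_C {C D : Finset (Finset X)} {σ c : Finset X} (h : IsSrcOf C D σ c) :
    c ∈ C := h.1 (self_mem_cubeAt c σ)

lemma IsSrcOf.not_mem_D {C D : Finset (Finset X)} {σ c : Finset X} (h : IsSrcOf C D σ c) :
    c ∉ D := fun hc => h.2 (mem_restrictTo.2 ⟨c, hc, rfl⟩)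

lemma source_exists_unique {C D : Finset (Finset X)} {G σ : Finset X} {d : ℕ}
    (hC : MaxOn C G (d+1)) (hD : MaxOn D G d) (hσG : σ ⊆ G) (hσ : σ.card = d + 1) :
    ∃! c, IsSrcOf C D σ c := by
  obtain ⟨s₀, ⟨hs₀σ, hs₀⟩, hs₀uniq⟩ := exists_unique_missing hD hσG hσ
  obtain ⟨c₀, hc₀⟩ := cube_exists (d+1) C G σ hC hσG hσ
  refine ⟨(c₀ \ σ) ∪ s₀, ⟨?_, ?_⟩, ?_⟩
  · rwa [cubeAt_congr (base_of_mem_cubeAt (mem_cubeAt.2 ⟨s₀, hs₀σ, rfl⟩))]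
  · rwa [inter_of_mem_cubeAt hs₀σ]
  · rintro c' ⟨hcube', htr'⟩
    have htrace : c' ∩ σ = s₀ := hs₀uniq _ ⟨Finset.inter_subset_right, htr'⟩
    have hbase : c' \ σ = c₀ \ σ :=
      cube_unique (d+1) C G σ c' c₀ hC hσG hσ hcube' hc₀
    calc c' = c' \ σ ∪ c' ∩ σ := by rw [Finset.sdiff_union_inter]
      _ = (c₀ \ σ) ∪ s₀ := by rw [hbase, htrace]

/-! #### Flip of a single coordinate -/

def flip1 (z : X) (c : Finset X) : Finset X := if z ∈ c then c.erase z else insert z c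

lemma mem_flip1 {a z : X} {c : Finset X} :
    a ∈ flip1 z c ↔ ((a = z ∧ z ∉ c) ∨ (a ≠ z ∧ a ∈ c)) := by
  unfold flip1
  split_ifs with h
  · simp only [Finset.mem_erase]
    constructor
    · rintro ⟨h1, h2⟩; exact Or.inr ⟨h1, h2⟩
    · rintro (⟨rfl, h2⟩ | ⟨h1, h2⟩); · exact absurd h h2
      · exact ⟨h1, h2⟩
  · simp only [Finset.mem_insert]
    constructor
    · rintro (rfl | h1)
      · exact Or.inl ⟨rfl, h⟩
      · by_cases haz : a = z
        · exact Or.inl ⟨haz, h⟩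
        · exact Or.inr ⟨haz, h1⟩
    · rintro (⟨rfl, _⟩ | ⟨_, h2⟩)
      · exact Or.inl rfl
      · exact Or.inr h2

lemma flip1_erase (z : X) (c : Finset X) : (flip1 z c).erase z = c.erase z := by
  ext a
  simp only [Finset.mem_erase, mem_flip1]
  tauto

lemma flip1_ne (z : X) (c : Finset X) : flip1 z c ≠ c := by
  intro h
  have := mem_flip1 (a := z) (z := z) (c := c)
  rw [h] at this
  tauto

lemma flip1_mem_iff {z : X} {c : Finset X} : z ∈ flip1 z c ↔ z ∉ c := by
  rw [mem_flip1]; tauto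

lemma flip1_flip1 (z : X) (c : Finset X) : flip1 z (flip1 z c) = c := by
  ext a
  simp only [mem_flip1]
  by_cases haz : a = z
  · subst haz; by_cases hz : a ∈ c <;> tauto
  · tauto

lemma flip1_inter_of_not_mem {z : X} {c σ : Finset X} (hz : z ∉ σ) :
    flip1 z c ∩ σ = c ∩ σ := by
  ext a
  simp only [Finset.mem_inter, mem_flip1]
  constructor
  · rintro ⟨(⟨rfl, _⟩ | ⟨_, h2⟩), hσ⟩
    · exact absurd hσ hz
    · exact ⟨h2, hσ⟩
  · rintro ⟨hc, hσ⟩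
    exact ⟨Or.inr ⟨fun h => hz (h ▸ hσ), hc⟩, hσ⟩

lemma flip1_sdiff_of_mem {z : X} {c σ : Finset X} (hz : z ∈ σ) :
    flip1 z c \ σ = c \ σ := by
  ext a
  simp only [Finset.mem_sdiff, mem_flip1]
  constructor
  · rintro ⟨(⟨rfl, _⟩ | ⟨_, h2⟩), hσ⟩
    · exact absurd hz hσ
    · exact ⟨h2, hσ⟩
  · rintro ⟨hc, hσ⟩
    exact ⟨Or.inr ⟨fun h => hσ (h ▸ hz), hc⟩, hσ⟩

lemma flip1_subset {z : X} {c G : Finset X} (hc : c ⊆ G) (hz : z ∈ G) :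
    flip1 z c ⊆ G := by
  intro a ha
  rcases mem_flip1.1 ha with ⟨rfl, _⟩ | ⟨_, h⟩
  · exact hz
  · exact hc h

lemma eq_flip1_of_erase_eq {z : X} {b c : Finset X} (h : b.erase z = c.erase z)
    (hne : b ≠ c) : b = flip1 z c := by
  ext a
  by_cases haz : a = z
  · subst haz
    rw [flip1_mem_iff]
    constructor
    · intro hab hac
      exact hne (by rw [← Finset.insert_erase hab, h, Finset.insert_erase hac])
    · intro hac
      by_contra hab
      exact hne (by rw [← Finset.erase_eq_of_notMem hab, h, Finset.erase_eq_of_notMem hac])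
  · rw [mem_flip1]
    have hb : a ∈ b ↔ a ∈ c := by
      constructor
      · intro hab
        exact Finset.mem_of_mem_erase (h ▸ Finset.mem_erase_of_ne_of_mem haz hab)
      · intro hac
        exact Finset.mem_of_mem_erase (h.symm ▸ Finset.mem_erase_of_ne_of_mem haz hac)
    rw [hb]
    tauto

lemma erase_inter_erase (z : X) (c σ : Finset X) :
    c.erase z ∩ σ.erase z = (c ∩ σ).erase z := by
  ext a
  simp only [Finset.mem_inter, Finset.mem_erase]
  tauto

lemma erase_sdiff_of_mem {z : X} {c σ : Finset X} (hz : z ∈ σ) :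
    c.erase z \ σ = c \ σ := by
  ext a
  simp only [Finset.mem_sdiff, Finset.mem_erase]
  constructor
  · rintro ⟨⟨_, h1⟩, h2⟩; exact ⟨h1, h2⟩
  · rintro ⟨h1, h2⟩; exact ⟨⟨fun he => h2 (he ▸ hz), h1⟩, h2⟩

lemma flip1_inter_of_mem {z : X} {c σ : Finset X} (hz : z ∈ σ) :
    flip1 z c ∩ σ = flip1 z (c ∩ σ) := by
  ext a
  simp only [Finset.mem_inter, mem_flip1]
  by_cases haz : a = z
  · subst haz; tauto
  · tauto

lemma cube_reduce {C : Finset (Finset X)} {z : X} {σ b : Finset X}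
    (hb : cubeAt b σ ⊆ C) (hzσ : z ∈ σ) :
    cubeAt (b \ σ) (σ.erase z) ⊆ reduction C z := by
  intro t ht
  obtain ⟨s, hs, rfl⟩ := mem_cubeAt.1 ht
  have hbb : (b \ σ) \ σ.erase z = b \ σ := by
    rw [Finset.sdiff_eq_self_iff_disjoint, Finset.disjoint_left]
    intro a ha haσ'
    exact (Finset.mem_sdiff.1 ha).2 (Finset.mem_of_mem_erase haσ')
  rw [hbb]
  have hsσ : s ⊆ σ := hs.trans (Finset.erase_subset z σ)
  have hmem1 : (b \ σ) ∪ s ∈ cubeAt b σ := mem_cubeAt.2 ⟨s, hsσ, rfl⟩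
  have hmem2 : (b \ σ) ∪ insert z s ∈ cubeAt b σ :=
    mem_cubeAt.2 ⟨insert z s, Finset.insert_subset hzσ hsσ, rfl⟩
  rw [reduction, Finset.mem_filter]
  refine ⟨hb hmem1, ?_, ?_⟩
  · rw [Finset.mem_union, Finset.mem_sdiff]
    rintro (⟨_, hn⟩ | hxs)
    · exact hn hzσ
    · exact (Finset.mem_erase.1 (hs hxs)).1 rfl
  · rw [← Finset.union_insert]
    exact hb hmem2

lemma cube_unreduce {C : Finset (Finset X)} {z : X} {σ cb : Finset X} (hzσ : z ∈ σ)
    (hcb : cubeAt cb (σ.erase z) ⊆ reduction C z) : cubeAt cb σ ⊆ C := by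
  have hxcb : z ∉ cb := by
    have : cb ∈ reduction C z := hcb (self_mem_cubeAt _ _)
    rw [reduction, Finset.mem_filter] at this
    exact this.2.1
  have hbase : cb \ σ = cb \ σ.erase z := by
    ext a
    simp only [Finset.mem_sdiff, Finset.mem_erase]
    constructor
    · rintro ⟨ha, hna⟩; exact ⟨ha, fun h => hna h.2⟩
    · rintro ⟨ha, hna⟩
      refine ⟨ha, fun h => hna ⟨fun he => hxcb (he ▸ ha), h⟩⟩
  intro b hb
  obtain ⟨s, hs, rfl⟩ := mem_cubeAt.1 hb
  set s' := s.erase z with hs'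
  have hs'sub : s' ⊆ σ.erase z := Finset.erase_subset_erase z hs
  have hb' : (cb \ σ.erase z) ∪ s' ∈ cubeAt cb (σ.erase z) :=
    mem_cubeAt.2 ⟨s', hs'sub, rfl⟩
  have hb'red := hcb hb'
  rw [reduction, Finset.mem_filter] at hb'red
  obtain ⟨hb'C, hxb', hib'⟩ := hb'red
  by_cases hxs : z ∈ s
  · have heq : (cb \ σ) ∪ s = insert z ((cb \ σ.erase z) ∪ s') := by
      rw [hbase, hs']
      exact union_insert_erase hxs
    rw [heq]
    exact hib'
  · have heq : (cb \ σ) ∪ s = (cb \ σ.erase z) ∪ s' := by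
      rw [hbase, hs', Finset.erase_eq_of_notMem hxs]
    rw [heq]
    exact hb'C

/-- Restriction correspondence, forward. -/
lemma srcOf_restrict {C D : Finset (Finset X)} {z : X} {σ c : Finset X} (hz : z ∉ σ)
    (h : IsSrcOf C D σ c) : IsSrcOf (restrictX C z) (restrictX D z) σ (c.erase z) := by
  constructor
  · intro b hb
    obtain ⟨s, hs, rfl⟩ := mem_cubeAt.1 hb
    have hzs : z ∉ s := fun hzs => hz (hs hzs)
    have heq : (c.erase z) \ σ ∪ s = ((c \ σ) ∪ s).erase z := by
      rw [Finset.erase_union_distrib, ← Finset.erase_sdiff_comm,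
        Finset.erase_eq_of_notMem hzs]
    rw [heq]
    exact Finset.mem_image.2 ⟨(c \ σ) ∪ s, h.1 (mem_cubeAt.2 ⟨s, hs, rfl⟩), rfl⟩
  · rw [restrictTo_restrictX hz, erase_inter_of_not_mem hz]
    exact h.2

/-- Restriction correspondence, backward. -/
lemma srcOf_unrestrict {C D : Finset (Finset X)} {G : Finset X} {e : ℕ} {z : X} {σ c : Finset X}
    (hC : MaxOn C G (e+1)) (hzG : z ∈ G) (hz : z ∉ σ) (hσG : σ ⊆ G) (hσ : σ.card = e+1)
    (h : IsSrcOf (restrictX C z) (restrictX D z) σ (c.erase z)) :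
    ∃ b, (b = c ∨ b = flip1 z c) ∧ IsSrcOf C D σ b := by
  obtain ⟨c₀, hc₀⟩ := cube_exists (e+1) C G σ hC hσG hσ
  have hres : cubeAt (c₀.erase z) σ ⊆ restrictX C z := by
    intro b hb
    obtain ⟨s, hs, rfl⟩ := mem_cubeAt.1 hb
    have hzs : z ∉ s := fun hzs => hz (hs hzs)
    have heq : (c₀.erase z) \ σ ∪ s = ((c₀ \ σ) ∪ s).erase z := by
      rw [Finset.erase_union_distrib, ← Finset.erase_sdiff_comm,
        Finset.erase_eq_of_notMem hzs]
    rw [heq]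
    exact Finset.mem_image.2 ⟨(c₀ \ σ) ∪ s, hc₀ (mem_cubeAt.2 ⟨s, hs, rfl⟩), rfl⟩
  have hCz : MaxOn (restrictX C z) (G.erase z) (e+1) := hC.restrX hzG
  have hσGz : σ ⊆ G.erase z := Finset.subset_erase.2 ⟨hσG, hz⟩
  have hbase : (c.erase z) \ σ = (c₀.erase z) \ σ :=
    cube_unique (e+1) (restrictX C z) (G.erase z) σ _ _ hCz hσGz hσ h.1 hres
  set b := (c₀ \ σ) ∪ (c ∩ σ) with hbdef
  have hbcube : b ∈ cubeAt c₀ σ := mem_cubeAt.2 ⟨c ∩ σ, Finset.inter_subset_right, rfl⟩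
  have hzcσ : z ∉ c ∩ σ := fun hm => hz (Finset.mem_inter.1 hm).2
  have hbz : b.erase z = c.erase z := by
    calc b.erase z = (c₀ \ σ).erase z ∪ (c ∩ σ) := by
          rw [hbdef, Finset.erase_union_distrib, Finset.erase_eq_of_notMem hzcσ]
      _ = (c.erase z) \ σ ∪ (c.erase z) ∩ σ := by
          rw [← Finset.erase_sdiff_comm, ← hbase, erase_inter_of_not_mem hz]
      _ = c.erase z := Finset.sdiff_union_inter _ _
  have hbsrc : IsSrcOf C D σ b := by
    constructor
    · rw [cubeAt_congr (base_of_mem_cubeAt hbcube)]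
      exact hc₀
    · rw [inter_of_mem_cubeAt Finset.inter_subset_right]
      have := h.2
      rw [restrictTo_restrictX hz, erase_inter_of_not_mem hz] at this
      exact this
  by_cases hbc : b = c
  · exact ⟨b, Or.inl hbc, hbsrc⟩
  · exact ⟨b, Or.inr (eq_flip1_of_erase_eq hbz hbc), hbsrc⟩

/-- Reduction correspondence, forward. -/
lemma srcOf_reduce {C D : Finset (Finset X)} {z : X} {σ c : Finset X} (hzσ : z ∈ σ)
    (h : IsSrcOf C D σ c) : IsSrcOf (reduction C z) (reduction D z) (σ.erase z) (c.erase z) := by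
  constructor
  · have h1 : cubeAt (c \ σ) (σ.erase z) ⊆ reduction C z := cube_reduce h.1 hzσ
    have hbeq : (c.erase z) \ (σ.erase z) = (c \ σ) \ (σ.erase z) := by
      ext a
      simp only [Finset.mem_sdiff, Finset.mem_erase]
      constructor
      · rintro ⟨⟨haz, hac⟩, hn⟩
        exact ⟨⟨hac, fun haσ => hn ⟨haz, haσ⟩⟩, hn⟩
      · rintro ⟨⟨hac, haσ⟩, hn⟩
        exact ⟨⟨fun he => haσ (he ▸ hzσ), hac⟩, hn⟩
    rw [cubeAt_congr hbeq]
    exact h1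
  · rw [erase_inter_erase]
    intro hmem
    obtain ⟨t, ht, htr⟩ := mem_restrictTo.1 hmem
    rw [reduction, Finset.mem_filter] at ht
    obtain ⟨htD, hzt, hit⟩ := ht
    have hztσ : z ∉ t ∩ σ := fun hm => hzt (Finset.mem_inter.1 hm).1
    have h1 : t ∩ (σ.erase z) = t ∩ σ := by
      rw [Finset.inter_comm, Finset.erase_inter, Finset.inter_comm σ t,
        Finset.erase_eq_of_notMem hztσ]
    rw [h1] at htr
    by_cases hzc : z ∈ c
    · refine h.2 (mem_restrictTo.2 ⟨insert z t, hit, ?_⟩)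
      rw [Finset.insert_inter_of_mem hzσ, htr,
        Finset.insert_erase (Finset.mem_inter.2 ⟨hzc, hzσ⟩)]
    · refine h.2 (mem_restrictTo.2 ⟨t, htD, ?_⟩)
      rw [htr, Finset.erase_eq_of_notMem (fun hm => hzc (Finset.mem_inter.1 hm).1)]

/-- Reduction correspondence, backward. -/
lemma srcOf_unreduce {C D : Finset (Finset X)} {G : Finset X} {f : ℕ} {z : X} {σ c : Finset X}
    (hD : MaxOn D G (f+1)) (hzG : z ∈ G) (hzσ : z ∈ σ)
    (hσG : σ ⊆ G) (hσ : σ.card = f+2)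
    (h : IsSrcOf (reduction C z) (reduction D z) (σ.erase z) (c.erase z)) :
    ∃ b, (b = c ∨ b = flip1 z c) ∧ IsSrcOf C D σ b := by
  have hcube : cubeAt (c.erase z) σ ⊆ C := cube_unreduce hzσ h.1
  have hcbase : (c.erase z) \ σ = c \ σ := erase_sdiff_of_mem hzσ
  have hccube : cubeAt c σ ⊆ C := by rw [← cubeAt_congr hcbase]; exact hcube
  have hfcube : cubeAt (flip1 z c) σ ⊆ C := by
    rw [cubeAt_congr (flip1_sdiff_of_mem hzσ)]; exact hccube
  obtain ⟨s₀, ⟨hs₀σ, hs₀m⟩, hs₀u⟩ := exists_unique_missing hD hσG (by omega : σ.card = (f+1)+1)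
  have hDz : MaxOn (reduction D z) (G.erase z) f := hD.reduc hzG
  have hσz : (σ.erase z) ⊆ G.erase z := Finset.erase_subset_erase z hσG
  have hσzc : (σ.erase z).card = f + 1 := by
    rw [Finset.card_erase_of_mem hzσ, hσ]
    omega
  obtain ⟨sb, _, hsbu⟩ := exists_unique_missing hDz hσz hσzc
  -- (c ∩ σ).erase z is a missing trace of the reduced pair
  have hm1 : (c ∩ σ).erase z ⊆ σ.erase z ∧ (c ∩ σ).erase z ∉ restrictTo (reduction D z) (σ.erase z) := by
    constructor
    · exact Finset.erase_subset_erase z Finset.inter_subset_right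
    · have := h.2
      rwa [erase_inter_erase] at this
  -- s₀.erase z is a missing trace of the reduced pair
  have hm2 : s₀.erase z ⊆ σ.erase z ∧ s₀.erase z ∉ restrictTo (reduction D z) (σ.erase z) := by
    refine ⟨Finset.erase_subset_erase z hs₀σ, ?_⟩
    intro hmem
    obtain ⟨t, ht, htr⟩ := mem_restrictTo.1 hmem
    rw [reduction, Finset.mem_filter] at ht
    obtain ⟨htD, hzt, hit⟩ := ht
    have hztσ : z ∉ t ∩ σ := fun hm => hzt (Finset.mem_inter.1 hm).1
    have h1 : t ∩ (σ.erase z) = t ∩ σ := by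
      rw [Finset.inter_comm, Finset.erase_inter, Finset.inter_comm σ t,
        Finset.erase_eq_of_notMem hztσ]
    rw [h1] at htr
    by_cases hzs : z ∈ s₀
    · refine hs₀m (mem_restrictTo.2 ⟨insert z t, hit, ?_⟩)
      rw [Finset.insert_inter_of_mem hzσ, htr, Finset.insert_erase hzs]
    · refine hs₀m (mem_restrictTo.2 ⟨t, htD, ?_⟩)
      rw [htr, Finset.erase_eq_of_notMem hzs]
  have hkey : (c ∩ σ).erase z = s₀.erase z := by
    rw [hsbu _ hm1, hsbu _ hm2]
  by_cases hcs : c ∩ σ = s₀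
  · refine ⟨c, Or.inl rfl, hccube, ?_⟩
    rw [hcs]; exact hs₀m
  · refine ⟨flip1 z c, Or.inr rfl, hfcube, ?_⟩
    rw [flip1_inter_of_mem hzσ, ← eq_flip1_of_erase_eq hkey.symm (Ne.symm hcs)]
    exact hs₀m

/-! #### Counting equations -/

lemma cnt_zero_of_mem_D {C D F : Finset (Finset X)} {v : Finset X} (h : v ∈ D) :
    (F.filter (fun σ => IsSrcOf C D σ v)).card = 0 := by
  rw [Finset.card_eq_zero, Finset.filter_eq_empty_iff]
  intro σ _ hsrc
  exact hsrc.not_mem_D h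

lemma cnt_zero_of_not_mem_C {C D F : Finset (Finset X)} {v : Finset X} (h : v ∉ C) :
    (F.filter (fun σ => IsSrcOf C D σ v)).card = 0 := by
  rw [Finset.card_eq_zero, Finset.filter_eq_empty_iff]
  intro σ _ hsrc
  exact h hsrc.mem_C

lemma cntB_zero {C D F : Finset (Finset X)} {z : X} {t : Finset X} (h : flip1 z t ∈ D) :
    ((F.filter (fun σ => IsSrcOf C D σ t)).filter (fun σ => z ∉ σ)).card = 0 := by
  rw [Finset.card_eq_zero, Finset.filter_eq_empty_iff]
  intro σ hσ hz
  rw [Finset.mem_filter] at hσ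
  refine hσ.2.2 (mem_restrictTo.2 ⟨flip1 z t, h, ?_⟩)
  exact flip1_inter_of_not_mem hz

lemma cntA_zero {C D F : Finset (Finset X)} {z : X} {t : Finset X} (h : flip1 z t ∉ C) :
    ((F.filter (fun σ => IsSrcOf C D σ t)).filter (fun σ => z ∈ σ)).card = 0 := by
  rw [Finset.card_eq_zero, Finset.filter_eq_empty_iff]
  intro σ hσ hz
  rw [Finset.mem_filter] at hσ
  refine h (hσ.2.1 ?_)
  exact mem_cubeAt_iff_base.2 (flip1_sdiff_of_mem hz)

lemma countB_pair {C D : Finset (Finset X)} {G : Finset X} {e : ℕ} {z : X}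
    (hC : MaxOn C G (e+1)) (hD : MaxOn D G e) (hzG : z ∈ G) (u : Finset X) :
    (((G.powersetCard (e+1)).filter (fun σ => IsSrcOf C D σ u)).filter (fun σ => z ∉ σ)).card
      + (((G.powersetCard (e+1)).filter (fun σ => IsSrcOf C D σ (flip1 z u))).filter
          (fun σ => z ∉ σ)).card
      = (((G.erase z).powersetCard (e+1)).filter
          (fun σ => IsSrcOf (restrictX C z) (restrictX D z) σ (u.erase z))).card := by
  have hdisj : Disjoint
      (((G.powersetCard (e+1)).filter (fun σ => IsSrcOf C D σ u)).filter (fun σ => z ∉ σ))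
      (((G.powersetCard (e+1)).filter (fun σ => IsSrcOf C D σ (flip1 z u))).filter
        (fun σ => z ∉ σ)) := by
    rw [Finset.disjoint_left]
    intro σ h1 h2
    rw [Finset.mem_filter, Finset.mem_filter, Finset.mem_powersetCard] at h1 h2
    obtain ⟨⟨⟨hσG, hσc⟩, hs1⟩, _⟩ := h1
    obtain ⟨⟨_, hs2⟩, _⟩ := h2
    obtain ⟨b, _, hbu⟩ := source_exists_unique hC hD hσG hσc
    exact flip1_ne z u ((hbu _ hs2).trans (hbu _ hs1).symm)
  rw [← Finset.card_union_of_disjoint hdisj]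
  congr 1
  ext σ
  simp only [Finset.mem_union, Finset.mem_filter, Finset.mem_powersetCard]
  constructor
  · rintro (⟨⟨⟨hσG, hσc⟩, hsrc⟩, hzσ⟩ | ⟨⟨⟨hσG, hσc⟩, hsrc⟩, hzσ⟩)
    · exact ⟨⟨Finset.subset_erase.2 ⟨hσG, hzσ⟩, hσc⟩, srcOf_restrict hzσ hsrc⟩
    · refine ⟨⟨Finset.subset_erase.2 ⟨hσG, hzσ⟩, hσc⟩, ?_⟩
      have := srcOf_restrict hzσ hsrc
      rwa [flip1_erase] at this
  · rintro ⟨⟨hσG', hσc⟩, hsrc⟩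
    have hzσ : z ∉ σ := fun hm => (Finset.mem_erase.1 (hσG' hm)).1 rfl
    have hσG : σ ⊆ G := hσG'.trans (Finset.erase_subset z G)
    obtain ⟨b, hb, hbsrc⟩ := srcOf_unrestrict hC hzG hzσ hσG hσc hsrc
    rcases hb with rfl | rfl
    · exact Or.inl ⟨⟨⟨hσG, hσc⟩, hbsrc⟩, hzσ⟩
    · exact Or.inr ⟨⟨⟨hσG, hσc⟩, hbsrc⟩, hzσ⟩

lemma countA_pair {C D : Finset (Finset X)} {G : Finset X} {f : ℕ} {z : X}
    (hC : MaxOn C G (f+2)) (hD : MaxOn D G (f+1)) (hzG : z ∈ G) (u : Finset X) :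
    (((G.powersetCard (f+2)).filter (fun σ => IsSrcOf C D σ u)).filter (fun σ => z ∈ σ)).card
      + (((G.powersetCard (f+2)).filter (fun σ => IsSrcOf C D σ (flip1 z u))).filter
          (fun σ => z ∈ σ)).card
      = (((G.erase z).powersetCard (f+1)).filter
          (fun σ => IsSrcOf (reduction C z) (reduction D z) σ (u.erase z))).card := by
  have hdisj : Disjoint
      (((G.powersetCard (f+2)).filter (fun σ => IsSrcOf C D σ u)).filter (fun σ => z ∈ σ))
      (((G.powersetCard (f+2)).filter (fun σ => IsSrcOf C D σ (flip1 z u))).filter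
        (fun σ => z ∈ σ)) := by
    rw [Finset.disjoint_left]
    intro σ h1 h2
    rw [Finset.mem_filter, Finset.mem_filter, Finset.mem_powersetCard] at h1 h2
    obtain ⟨⟨⟨hσG, hσc⟩, hs1⟩, _⟩ := h1
    obtain ⟨⟨_, hs2⟩, _⟩ := h2
    obtain ⟨b, _, hbu⟩ := source_exists_unique hC hD hσG hσc
    exact flip1_ne z u ((hbu _ hs2).trans (hbu _ hs1).symm)
  rw [← Finset.card_union_of_disjoint hdisj]
  refine Finset.card_bij' (fun σ _ => σ.erase z) (fun σ _ => insert z σ) ?_ ?_ ?_ ?_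
  · intro σ hσ
    simp only [Finset.mem_union, Finset.mem_filter, Finset.mem_powersetCard] at hσ
    rw [Finset.mem_filter, Finset.mem_powersetCard]
    rcases hσ with ⟨⟨⟨hσG, hσc⟩, hsrc⟩, hzσ⟩ | ⟨⟨⟨hσG, hσc⟩, hsrc⟩, hzσ⟩
    · refine ⟨⟨Finset.erase_subset_erase z hσG, by rw [Finset.card_erase_of_mem hzσ, hσc]; omega⟩, ?_⟩
      exact srcOf_reduce hzσ hsrc
    · refine ⟨⟨Finset.erase_subset_erase z hσG, by rw [Finset.card_erase_of_mem hzσ, hσc]; omega⟩, ?_⟩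
      have := srcOf_reduce hzσ hsrc
      rwa [flip1_erase] at this
  · intro σ hσ
    rw [Finset.mem_filter, Finset.mem_powersetCard] at hσ
    obtain ⟨⟨hσG', hσc⟩, hsrc⟩ := hσ
    have hzσ' : z ∉ σ := fun hm => (Finset.mem_erase.1 (hσG' hm)).1 rfl
    have h1 : (insert z σ).erase z = σ := Finset.erase_insert hzσ'
    have h2 : insert z σ ⊆ G := Finset.insert_subset hzG (hσG'.trans (Finset.erase_subset z G))
    have h3 : (insert z σ).card = f + 2 := by
      rw [Finset.card_insert_of_notMem hzσ', hσc]
    have h4 : IsSrcOf (reduction C z) (reduction D z) ((insert z σ).erase z) (u.erase z) := by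
      rwa [h1]
    obtain ⟨b, hb, hbsrc⟩ := srcOf_unreduce hD hzG (Finset.mem_insert_self z σ) h2 h3 h4
    simp only [Finset.mem_union, Finset.mem_filter, Finset.mem_powersetCard]
    rcases hb with rfl | rfl
    · exact Or.inl ⟨⟨⟨h2, h3⟩, hbsrc⟩, Finset.mem_insert_self z σ⟩
    · exact Or.inr ⟨⟨⟨h2, h3⟩, hbsrc⟩, Finset.mem_insert_self z σ⟩
  · intro σ hσ
    simp only [Finset.mem_union, Finset.mem_filter] at hσ
    have hzσ : z ∈ σ := by
      rcases hσ with ⟨_, h⟩ | ⟨_, h⟩ <;> exact h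
    exact Finset.insert_erase hzσ
  · intro σ hσ
    rw [Finset.mem_filter, Finset.mem_powersetCard] at hσ
    have hzσ' : z ∉ σ := fun hm => (Finset.mem_erase.1 (hσ.1.1 hm)).1 rfl
    exact Finset.erase_insert hzσ'

lemma flip1_empty (z : X) : flip1 z (∅ : Finset X) = {z} := by
  simp [flip1]

lemma flip1_singleton_self (z : X) : flip1 z ({z} : Finset X) = ∅ := by
  simp [flip1]

lemma countA_e0 {C D : Finset (Finset X)} {G : Finset X} {z : X}
    (hC : MaxOn C G 1) (hD : MaxOn D G 0) (hzG : z ∈ G) (u : Finset X)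
    (huC : u ∈ C) (hfuC : flip1 z u ∈ C) :
    (((G.powersetCard 1).filter (fun σ => IsSrcOf C D σ u)).filter (fun σ => z ∈ σ)).card
      + (((G.powersetCard 1).filter (fun σ => IsSrcOf C D σ (flip1 z u))).filter
          (fun σ => z ∈ σ)).card = 1 := by
  have hAval : ∀ v : Finset X,
      ((G.powersetCard 1).filter (fun σ => IsSrcOf C D σ v)).filter (fun σ => z ∈ σ)
        = if IsSrcOf C D {z} v then {({z} : Finset X)} else ∅ := by
    intro v
    ext σ
    simp only [Finset.mem_filter, Finset.mem_powersetCard]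
    constructor
    · rintro ⟨⟨⟨hσG, hσc⟩, hsrc⟩, hzσ⟩
      obtain ⟨a, rfl⟩ := Finset.card_eq_one.1 hσc
      have haz : z = a := Finset.mem_singleton.1 hzσ
      subst haz
      rw [if_pos hsrc]
      exact Finset.mem_singleton_self _
    · intro h
      by_cases hs : IsSrcOf C D {z} v
      · rw [if_pos hs, Finset.mem_singleton] at h
        subst h
        exact ⟨⟨⟨Finset.singleton_subset_iff.2 hzG, Finset.card_singleton z⟩, hs⟩,
          Finset.mem_singleton_self z⟩
      · rw [if_neg hs] at h
        exact absurd h (Finset.notMem_empty σ)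
  have hcube : cubeAt u {z} ⊆ C := by
    intro b hb
    obtain ⟨s, hs, rfl⟩ := mem_cubeAt.1 hb
    have herase : u \ {z} = u.erase z := (Finset.erase_eq u z).symm
    rcases Finset.subset_singleton_iff.1 hs with rfl | rfl
    · rw [Finset.union_empty, herase]
      by_cases hzu : z ∈ u
      · have : u.erase z = flip1 z u := by rw [flip1, if_pos hzu]
        rw [this]; exact hfuC
      · rw [Finset.erase_eq_of_notMem hzu]; exact huC
    · have : u \ {z} ∪ {z} = insert z (u.erase z) := by
        rw [herase]
        ext a
        simp only [Finset.mem_union, Finset.mem_insert, Finset.mem_erase, Finset.mem_singleton]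
        tauto
      rw [this]
      by_cases hzu : z ∈ u
      · rw [Finset.insert_erase hzu]; exact huC
      · rw [Finset.erase_eq_of_notMem hzu]
        have : insert z u = flip1 z u := by rw [flip1, if_neg hzu]
        rw [this]; exact hfuC
  have hfcube : cubeAt (flip1 z u) {z} ⊆ C := by
    rw [cubeAt_congr (flip1_sdiff_of_mem (Finset.mem_singleton_self z))]
    exact hcube
  obtain ⟨s₀, ⟨hs₀σ, hs₀m⟩, hs₀u⟩ := exists_unique_missing hD
    (Finset.singleton_subset_iff.2 hzG) (by simp)
  have htr : flip1 z u ∩ {z} = flip1 z (u ∩ {z}) := flip1_inter_of_mem (Finset.mem_singleton_self z)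
  by_cases hcase : u ∩ {z} = s₀
  · have h1 : IsSrcOf C D {z} u := ⟨hcube, by rw [hcase]; exact hs₀m⟩
    have h2 : ¬ IsSrcOf C D {z} (flip1 z u) := by
      intro hsf
      have := hs₀u _ ⟨Finset.inter_subset_right, hsf.2⟩
      rw [htr, ← hcase] at this
      exact flip1_ne z (u ∩ {z}) this
    rw [hAval u, hAval (flip1 z u), if_pos h1, if_neg h2]
    simp
  · have hs₀val : flip1 z u ∩ {z} = s₀ := by
      rw [htr]
      rcases Finset.subset_singleton_iff.1
          (show u ∩ {z} ⊆ {z} from Finset.inter_subset_right) with h' | h' <;>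
      rcases Finset.subset_singleton_iff.1 hs₀σ with h'' | h'' <;>
        rw [h', h''] <;> first
          | (exfalso; exact hcase (h'.trans h''.symm))
          | rw [flip1_empty]
          | rw [flip1_singleton_self]
    have h2 : IsSrcOf C D {z} (flip1 z u) := ⟨hfcube, by rw [hs₀val]; exact hs₀m⟩
    have h1 : ¬ IsSrcOf C D {z} u := by
      intro hs
      exact hcase (hs₀u _ ⟨Finset.inter_subset_right, hs.2⟩)
    rw [hAval u, hAval (flip1 z u), if_neg h1, if_pos h2]
    simp

/-! #### Helpers for the main induction -/

lemma restrictTo_ground {D : Finset (Finset X)} {G : Finset X} (h : ∀ c ∈ D, c ⊆ G) :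
    restrictTo D G = D := by
  ext t
  rw [mem_restrictTo]
  constructor
  · rintro ⟨c, hc, rfl⟩
    rwa [Finset.inter_eq_left.2 (h c hc)]
  · intro ht
    exact ⟨t, ht, Finset.inter_eq_left.2 (h t ht)⟩

lemma pair_lift_mem {z : X} {t : Finset X} {C : Finset (Finset X)} (h1 : t ∈ C)
    (h2 : flip1 z t ∈ C) : t.erase z ∈ C ∧ insert z (t.erase z) ∈ C := by
  by_cases hzt : z ∈ t
  · have he : t.erase z = flip1 z t := by rw [flip1, if_pos hzt]
    exact ⟨by rw [he]; exact h2, by rw [Finset.insert_erase hzt]; exact h1⟩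
  · have he : t.erase z = t := Finset.erase_eq_of_notMem hzt
    refine ⟨by rw [he]; exact h1, ?_⟩
    rw [he, show insert z t = flip1 z t by rw [flip1, if_neg hzt]]
    exact h2

lemma pair_lift_not_mem {z : X} {t : Finset X} {D : Finset (Finset X)} (h : t ∉ D) :
    t.erase z ∉ D ∨ insert z (t.erase z) ∉ D := by
  by_cases hzt : z ∈ t
  · right; rw [Finset.insert_erase hzt]; exact h
  · left; rw [Finset.erase_eq_of_notMem hzt]; exact h

lemma erase_mem_reduction {z : X} {t : Finset X} {C : Finset (Finset X)}
    (h1 : t ∈ C) (h2 : flip1 z t ∈ C) : t.erase z ∈ reduction C z := by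
  obtain ⟨ha, hb⟩ := pair_lift_mem h1 h2
  rw [reduction, Finset.mem_filter]
  exact ⟨ha, Finset.notMem_erase z t, hb⟩

lemma erase_not_mem_reduction {z : X} {t : Finset X} {D : Finset (Finset X)}
    (h : t ∉ D) : t.erase z ∉ reduction D z := by
  intro hmem
  rw [reduction, Finset.mem_filter] at hmem
  rcases pair_lift_not_mem (z := z) h with h' | h'
  · exact h' hmem.1
  · exact h' hmem.2.2

lemma erase_not_mem_restrictX {z : X} {t : Finset X} {D : Finset (Finset X)}
    (h1 : t ∉ D) (h2 : flip1 z t ∉ D) : t.erase z ∉ restrictX D z := by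
  intro hmem
  obtain ⟨t', ht', he⟩ := Finset.mem_image.1 hmem
  by_cases htt : t' = t
  · exact h1 (htt ▸ ht')
  · exact h2 ((eq_flip1_of_erase_eq he htt) ▸ ht')

lemma reduction_mono {C D : Finset (Finset X)} (h : D ⊆ C) (z : X) :
    reduction D z ⊆ reduction C z := by
  intro t ht
  rw [reduction, Finset.mem_filter] at *
  exact ⟨h ht.1, ht.2.1, h ht.2.2⟩

lemma restrictX_mono {C D : Finset (Finset X)} (h : D ⊆ C) (z : X) :
    restrictX D z ⊆ restrictX C z :=
  Finset.image_subset_image h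

lemma flip1_symmdiff {c t : Finset X} {z : X} (hz : z ∈ (c \ t) ∪ (t \ c)) :
    (c \ flip1 z t) ∪ (flip1 z t \ c) = ((c \ t) ∪ (t \ c)).erase z := by
  ext a
  simp only [Finset.mem_union, Finset.mem_sdiff, Finset.mem_erase, mem_flip1]
  by_cases haz : a = z
  · subst haz
    simp only [Finset.mem_union, Finset.mem_sdiff] at hz
    tauto
  · tauto

/-- Main lemma (part 1, internal form): every `c ∈ C \ D` is the source of exactly one
incomplete cube. -/
lemma main1 : ∀ (n : ℕ) (G : Finset X) (C D : Finset (Finset X)) (e : ℕ),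
    G.card = n → MaxOn C G (e+1) → MaxOn D G e → D ⊆ C → e + 1 ≤ n →
    ∀ c ∈ C, c ∉ D →
      ((G.powersetCard (e+1)).filter (fun σ => IsSrcOf C D σ c)).card = 1 := by
  intro n
  induction n using Nat.strong_induction_on with
  | _ n IH =>
  intro G C D e hGn hC hD hDC hen c hcC hcD
  rcases eq_or_lt_of_le hen with heq | hlt
  · -- base case : G.card = e + 1, so C = 2^G and σ = G is the unique support
    have hCpow : C = G.powerset := by
      have hsub : C ⊆ G.powerset := fun b hb => Finset.mem_powerset.2 (hC.1 b hb)
      have hcard : C.card = 2 ^ G.card := by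
        rw [hC.2.2, hGn, ← heq, Nat.sum_range_choose]
      refine Finset.eq_of_subset_of_card_le hsub ?_
      rw [Finset.card_powerset, hcard]
    have hfilter : (G.powersetCard (e+1)).filter (fun σ => IsSrcOf C D σ c) = {G} := by
      ext σ
      simp only [Finset.mem_filter, Finset.mem_powersetCard, Finset.mem_singleton]
      constructor
      · rintro ⟨⟨hσG, hσc⟩, _⟩
        exact Finset.eq_of_subset_of_card_le hσG (by omega)
      · intro hσ
        rw [hσ]
        refine ⟨⟨subset_refl G, by omega⟩, ?_, ?_⟩
        · intro b hb
          obtain ⟨s, hs, rfl⟩ := mem_cubeAt.1 hb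
          rw [hCpow, Finset.mem_powerset]
          exact Finset.union_subset (Finset.sdiff_subset.trans (hC.1 c hcC)) hs
        · rw [Finset.inter_eq_left.2 (hC.1 c hcC), restrictTo_ground hD.1]
          exact hcD
    rw [hfilter, Finset.card_singleton]
  · -- inductive case : e + 1 < n
    by_contra hne
    -- the key trichotomy/propagation step
    have htri : ∀ t, t ∈ C → t ∉ D →
        ((G.powersetCard (e+1)).filter (fun σ => IsSrcOf C D σ t)).card ≠ 1 →
        ∀ z ∈ G, flip1 z t ∈ C ∧ flip1 z t ∉ D ∧
          ((G.powersetCard (e+1)).filter (fun σ => IsSrcOf C D σ (flip1 z t))).card ≠ 1 := by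
      intro t htC htD htn z hzG
      have hsplit : ∀ v : Finset X,
          (((G.powersetCard (e+1)).filter (fun σ => IsSrcOf C D σ v)).filter
            (fun σ => z ∈ σ)).card
          + (((G.powersetCard (e+1)).filter (fun σ => IsSrcOf C D σ v)).filter
            (fun σ => z ∉ σ)).card
          = ((G.powersetCard (e+1)).filter (fun σ => IsSrcOf C D σ v)).card := fun v =>
        Finset.card_filter_add_card_filter_not (p := fun σ => z ∈ σ)
      have hGez : (G.erase z).card = n - 1 := by
        rw [Finset.card_erase_of_mem hzG, hGn]
      have hlt' : n - 1 < n := by omega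
      -- the A-pair equation (valid whenever both t and its flip are in C)
      have hApair : t ∈ C → flip1 z t ∈ C → flip1 z t ∉ D ∨ t ∉ D →
          (((G.powersetCard (e+1)).filter (fun σ => IsSrcOf C D σ t)).filter
            (fun σ => z ∈ σ)).card
          + (((G.powersetCard (e+1)).filter (fun σ => IsSrcOf C D σ (flip1 z t))).filter
            (fun σ => z ∈ σ)).card = 1 := by
        intro h1 h2 _
        rcases e with _ | f
        · exact countA_e0 hC hD hzG t h1 h2
        · rw [countA_pair hC hD hzG t]
          refine IH (n-1) hlt' (G.erase z) (reduction C z) (reduction D z) f hGez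
            (hC.reduc hzG) (hD.reduc hzG) (reduction_mono hDC z) (by omega)
            (t.erase z) (erase_mem_reduction h1 h2) (erase_not_mem_reduction htD)
      -- the B-pair equation (valid whenever neither t nor its flip is in D)
      have hBpair : flip1 z t ∉ D →
          (((G.powersetCard (e+1)).filter (fun σ => IsSrcOf C D σ t)).filter
            (fun σ => z ∉ σ)).card
          + (((G.powersetCard (e+1)).filter (fun σ => IsSrcOf C D σ (flip1 z t))).filter
            (fun σ => z ∉ σ)).card = 1 := by
        intro h2
        rw [countB_pair hC hD hzG t]
        exact IH (n-1) hlt' (G.erase z) (restrictX C z) (restrictX D z) e hGez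
          (hC.restrX hzG) (hD.restrX hzG) (restrictX_mono hDC z) (by omega)
          (t.erase z) (Finset.mem_image_of_mem _ htC) (erase_not_mem_restrictX htD h2)
      by_cases hfD : flip1 z t ∈ D
      · exfalso
        apply htn
        have hB0 := cntB_zero (C := C) (D := D) (F := G.powersetCard (e+1)) (t := t) hfD
        have hAflip0 : (((G.powersetCard (e+1)).filter
            (fun σ => IsSrcOf C D σ (flip1 z t))).filter (fun σ => z ∈ σ)).card = 0 := by
          have h1 := cnt_zero_of_mem_D (C := C) (F := G.powersetCard (e+1)) hfD
          have h2 := Finset.card_le_card (Finset.filter_subset (fun σ => z ∈ σ)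
            ((G.powersetCard (e+1)).filter (fun σ => IsSrcOf C D σ (flip1 z t))))
          omega
        have hA := hApair htC (hDC hfD) (Or.inr htD)
        have := hsplit t
        omega
      by_cases hfC : flip1 z t ∈ C
      · refine ⟨hfC, hfD, ?_⟩
        intro hflip1
        apply htn
        have hA := hApair htC hfC (Or.inl hfD)
        have hB := hBpair hfD
        have h1 := hsplit t
        have h2 := hsplit (flip1 z t)
        omega
      · exfalso
        apply htn
        have hA0 := cntA_zero (C := C) (D := D) (F := G.powersetCard (e+1)) (t := t) hfC
        have hBflip0 : (((G.powersetCard (e+1)).filter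
            (fun σ => IsSrcOf C D σ (flip1 z t))).filter (fun σ => z ∉ σ)).card = 0 := by
          have h1 := cnt_zero_of_not_mem_C (C := C) (D := D) (F := G.powersetCard (e+1)) hfC
          have h2 := Finset.card_le_card (Finset.filter_subset (fun σ => z ∉ σ)
            ((G.powersetCard (e+1)).filter (fun σ => IsSrcOf C D σ (flip1 z t))))
          omega
        have hB := hBpair (fun hd => hfC (hDC hd))
        have := hsplit t
        omega
    -- the walk : every subset of G would be in C \ D
    have hwalk : ∀ (k : ℕ) (t : Finset X), t ⊆ G → ((c \ t) ∪ (t \ c)).card = k →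
        t ∈ C ∧ t ∉ D ∧
          ((G.powersetCard (e+1)).filter (fun σ => IsSrcOf C D σ t)).card ≠ 1 := by
      intro k
      induction k with
      | zero =>
          intro t htG hcard
          have hempty : (c \ t) ∪ (t \ c) = ∅ := Finset.card_eq_zero.1 hcard
          have h1 := Finset.union_eq_empty.1 hempty
          have : t = c := Finset.Subset.antisymm
            (Finset.sdiff_eq_empty_iff_subset.1 h1.2)
            (Finset.sdiff_eq_empty_iff_subset.1 h1.1)
          subst this
          exact ⟨hcC, hcD, hne⟩
      | succ k ihk =>
          intro t htG hcard
          have hnonempty : ((c \ t) ∪ (t \ c)).Nonempty := by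
            rw [← Finset.card_pos, hcard]; omega
          obtain ⟨z, hz⟩ := hnonempty
          have hzG : z ∈ G := by
            rcases Finset.mem_union.1 hz with h' | h'
            · exact hC.1 c hcC (Finset.mem_sdiff.1 h').1
            · exact htG (Finset.mem_sdiff.1 h').1
          have hsd : (c \ flip1 z t) ∪ (flip1 z t \ c) = ((c \ t) ∪ (t \ c)).erase z :=
            flip1_symmdiff hz
          have hcard' : ((c \ flip1 z t) ∪ (flip1 z t \ c)).card = k := by
            rw [hsd, Finset.card_erase_of_mem hz, hcard]
            omega
          obtain ⟨ht'C, ht'D, ht'n⟩ := ihk (flip1 z t) (flip1_subset htG hzG) hcard'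
          have := htri (flip1 z t) ht'C ht'D ht'n z hzG
          rwa [flip1_flip1] at this
    have hall : G.powerset ⊆ C := by
      intro t ht
      exact (hwalk (((c \ t) ∪ (t \ c)).card) t (Finset.mem_powerset.1 ht) rfl).1
    have h2n : 2 ^ n ≤ C.card := by
      calc 2 ^ n = G.powerset.card := by rw [Finset.card_powerset, hGn]
        _ ≤ C.card := Finset.card_le_card hall
    have hlt2 : C.card < 2 ^ n := by
      rw [hC.2.2, hGn, show e + 1 + 1 = e + 2 from rfl]
      have hsum : ∑ i ∈ Finset.range (e+3), n.choose i ≤ ∑ i ∈ Finset.range (n+1), n.choose i :=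
        Finset.sum_le_sum_of_subset (Finset.range_subset_range.2 (by omega))
      rw [Finset.sum_range_succ] at hsum
      have hpos : 0 < n.choose (e+2) := Nat.choose_pos (by omega)
      have h2 := Nat.sum_range_choose n
      omega
    omega

/-- Two distinct sources never clash on the union of their supports. -/
lemma nonclash_sources : ∀ (n : ℕ) (G : Finset X) (C D : Finset (Finset X)) (e : ℕ),
    G.card = n → MaxOn C G (e+1) → MaxOn D G e → D ⊆ C → e + 1 ≤ n →
    ∀ c c' σ σ' : Finset X, c ≠ c' → σ ⊆ G → σ.card = e+1 → σ' ⊆ G → σ'.card = e+1 →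
    IsSrcOf C D σ c → IsSrcOf C D σ' c' →
    c ∩ (σ ∪ σ') ≠ c' ∩ (σ ∪ σ') := by
  intro n
  induction n using Nat.strong_induction_on with
  | _ n IH =>
  intro G C D e hGn hC hD hDC hen c c' σ σ' hcc hσG hσc hσ'G hσ'c hs hs' hagree
  by_cases hσσ : σ = σ'
  · subst hσσ
    obtain ⟨b, _, hbu⟩ := source_exists_unique hC hD hσG hσc
    exact hcc ((hbu _ hs).trans (hbu _ hs').symm)
  by_cases hUG : σ ∪ σ' = G
  · apply hcc
    have h1 : c ∩ (σ ∪ σ') = c := by rw [hUG]; exact Finset.inter_eq_left.2 (hC.1 c hs.mem_C)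
    have h2 : c' ∩ (σ ∪ σ') = c' := by rw [hUG]; exact Finset.inter_eq_left.2 (hC.1 c' hs'.mem_C)
    rw [← h1, ← h2, hagree]
  have hss : σ ∪ σ' ⊂ G := (Finset.union_subset hσG hσ'G).ssubset_of_ne hUG
  obtain ⟨z, hzG, hzU⟩ := Finset.exists_of_ssubset hss
  have hzσ : z ∉ σ := fun h => hzU (Finset.mem_union_left _ h)
  have hzσ' : z ∉ σ' := fun h => hzU (Finset.mem_union_right _ h)
  have hres : IsSrcOf (restrictX C z) (restrictX D z) σ (c.erase z) := srcOf_restrict hzσ hs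
  have hres' : IsSrcOf (restrictX C z) (restrictX D z) σ' (c'.erase z) := srcOf_restrict hzσ' hs'
  have hGez : (G.erase z).card = n - 1 := by rw [Finset.card_erase_of_mem hzG, hGn]
  have hCz := hC.restrX hzG
  have hDz := hD.restrX hzG
  have hsub := restrictX_mono hDC z
  have hσGz : σ ⊆ G.erase z := Finset.subset_erase.2 ⟨hσG, hzσ⟩
  have hσ'Gz : σ' ⊆ G.erase z := Finset.subset_erase.2 ⟨hσ'G, hzσ'⟩
  have hcardlt : (σ ∪ σ').card < n := by rw [← hGn]; exact Finset.card_lt_card hss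
  have hcard1 : e + 1 ≤ (σ ∪ σ').card := by
    rw [← hσc]; exact Finset.card_le_card Finset.subset_union_left
  by_cases hcez : c.erase z = c'.erase z
  · have hcount := main1 (n-1) (G.erase z) (restrictX C z) (restrictX D z) e hGez hCz hDz hsub
      (by omega) (c.erase z) hres.mem_C hres.not_mem_D
    rw [← hcez] at hres'
    have hmem1 : σ ∈ ((G.erase z).powersetCard (e+1)).filter
        (fun τ => IsSrcOf (restrictX C z) (restrictX D z) τ (c.erase z)) :=
      Finset.mem_filter.2 ⟨Finset.mem_powersetCard.2 ⟨hσGz, hσc⟩, hres⟩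
    have hmem2 : σ' ∈ ((G.erase z).powersetCard (e+1)).filter
        (fun τ => IsSrcOf (restrictX C z) (restrictX D z) τ (c.erase z)) :=
      Finset.mem_filter.2 ⟨Finset.mem_powersetCard.2 ⟨hσ'Gz, hσ'c⟩, hres'⟩
    have := Finset.one_lt_card.2 ⟨σ, hmem1, σ', hmem2, hσσ⟩
    omega
  · have hagree' : (c.erase z) ∩ (σ ∪ σ') = (c'.erase z) ∩ (σ ∪ σ') := by
      rw [erase_inter_of_not_mem hzU, erase_inter_of_not_mem hzU, hagree]
    exact IH (n-1) (by omega) (G.erase z) (restrictX C z) (restrictX D z) e hGez hCz hDz hsub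
      (by omega) (c.erase z) (c'.erase z) σ σ' hcez hσGz hσc hσ'Gz hσ'c hres hres' hagree'

lemma MaxOn.card_shattered {C : Finset (Finset X)} {G : Finset X} {d : ℕ}
    (h : MaxOn C G d) : (G.powerset.filter (Shatters C)).card = C.card := by
  have hsub : G.powerset.filter (Shatters C) ⊆ G.powerset.filter (fun t => t.card ≤ d) := by
    intro t ht
    rw [Finset.mem_filter] at *
    exact ⟨ht.1, h.2.1 t ht.2⟩
  have h1 : (G.powerset.filter (Shatters C)).card ≤ C.card := by
    calc (G.powerset.filter (Shatters C)).card
        ≤ (G.powerset.filter (fun t => t.card ≤ d)).card := Finset.card_le_card hsub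
      _ = C.card := by rw [card_powerset_filter_le, h.2.2]
  exact le_antisymm h1 (pajor_ground h.1)

lemma trace_ne_of_sub {a b s S : Finset X} (hs : s ⊆ S) (h : a ∩ s ≠ b ∩ s) :
    a ∩ S ≠ b ∩ S := by
  intro heq
  apply h
  calc a ∩ s = a ∩ S ∩ s := by rw [Finset.inter_assoc, Finset.inter_eq_right.2 hs]
    _ = b ∩ S ∩ s := by rw [heq]
    _ = b ∩ s := by rw [Finset.inter_assoc, Finset.inter_eq_right.2 hs]

lemma isMaximumClass_maxOn {C : Finset (Finset X)} {d : ℕ} (h : IsMaximumClass C d) :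
    MaxOn C Finset.univ d ∧ d ≤ Fintype.card X := by
  obtain ⟨hvc, hcard⟩ := h
  have h1 : ∀ σ : Finset X, Shatters C σ → σ.card ≤ d := by
    intro σ hσ
    rw [← hvc]
    exact Finset.le_sup (f := Finset.card)
      (Finset.mem_filter.2 ⟨Finset.mem_univ σ, hσ⟩)
  have h2 : d ≤ Fintype.card X := by
    rw [← hvc]
    refine Finset.sup_le ?_
    intro σ _
    exact (Finset.card_le_univ σ).trans (le_of_eq Finset.card_univ)
  refine ⟨⟨fun c _ => Finset.subset_univ c, h1, ?_⟩, h2⟩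
  rw [hcard, Finset.card_univ]

end AuxDev
/-- For maximum classes `D ⊆ C` of VC dimensions `d-1` and `d`, every
`c ∈ C \ D` is the source of a unique incomplete cube; moreover any extension of a
representation map of `D` by `r c = supp (s⁻¹ c)` is a representation map of `C`. -/
theorem stmt_12 (C D : Finset (Finset X)) (d : ℕ)
    (hC : IsMaximumClass C d) (hD : IsMaximumClass D (d - 1)) (hDC : D ⊆ C) :
    (∀ c ∈ C, c ∉ D →
      ∃! Q : Finset (Finset X), ∃ σ, IsIncompleteCube C D Q σ ∧ IsSource D Q σ c) ∧
    (∀ (r' r : Finset X → Finset X), IsRepMap D r' →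
      (∀ c ∈ D, r c = r' c) →
      (∀ c ∈ C, c ∉ D → ∀ Q σ, IsIncompleteCube C D Q σ → IsSource D Q σ c → r c = σ) →
      IsRepMap C r) := by
    classical
  obtain ⟨hCmax, hdn⟩ := isMaximumClass_maxOn hC
  rcases Nat.eq_zero_or_pos d with rfl | hdpos
  · -- degenerate case d = 0 : D = C
    have hDmax : MaxOn D Finset.univ 0 := (isMaximumClass_maxOn hD).1
    have hDC' : D = C := by
      refine Finset.eq_of_subset_of_card_le hDC ?_
      rw [hCmax.2.2, hDmax.2.2]
    constructor
    · intro c hcC hcD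
      rw [← hDC'] at hcC
      exact absurd hcC hcD
    · intro r' r hr' hagree _
      rw [← hDC']
      obtain ⟨h1, h2, h3, h4⟩ := hr'
      refine ⟨?_, ?_, ?_, ?_⟩
      · intro c hc; rw [hagree c hc]; exact h1 c hc
      · intro a ha b hb hab
        rw [Finset.mem_coe] at ha hb
        exact h2 (Finset.mem_coe.2 ha) (Finset.mem_coe.2 hb)
          (by rwa [hagree a ha, hagree b hb] at hab)
      · intro Y hY
        obtain ⟨c, hc, hrc⟩ := h3 Y hY
        exact ⟨c, hc, by rw [hagree c hc]; exact hrc⟩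
      · intro a ha b hb hab
        rw [hagree a ha, hagree b hb]
        exact h4 a ha b hb hab
  · -- main case : d = e + 1
    obtain ⟨e, rfl⟩ : ∃ e, d = e + 1 := ⟨d - 1, by omega⟩
    have hDmax : MaxOn D Finset.univ e := (isMaximumClass_maxOn hD).1
    have hen : e + 1 ≤ (Finset.univ : Finset X).card := by
      rw [Finset.card_univ]; exact hdn
    have hmain : ∀ c ∈ C, c ∉ D →
        (((Finset.univ : Finset X).powersetCard (e+1)).filter
          (fun σ => IsSrcOf C D σ c)).card = 1 :=
      fun c hc hcd => main1 (Finset.univ : Finset X).card Finset.univ C D e rfl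
        hCmax hDmax hDC hen c hc hcd
    have hsig : ∀ c, c ∈ C → c ∉ D → ∃ σ, (IsSrcOf C D σ c ∧ σ.card = e + 1) ∧
        ∀ σ', IsSrcOf C D σ' c → σ'.card = e+1 → σ' = σ := by
      intro c hc hcd
      obtain ⟨σ, hσeq⟩ := Finset.card_eq_one.1 (hmain c hc hcd)
      have hσmem : σ ∈ ((Finset.univ : Finset X).powersetCard (e+1)).filter
          (fun σ => IsSrcOf C D σ c) := by
        rw [hσeq]; exact Finset.mem_singleton_self σ
      rw [Finset.mem_filter, Finset.mem_powersetCard] at hσmem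
      refine ⟨σ, ⟨hσmem.2, hσmem.1.2⟩, ?_⟩
      intro σ' hs' hc'
      have hm : σ' ∈ ((Finset.univ : Finset X).powersetCard (e+1)).filter
          (fun σ => IsSrcOf C D σ c) :=
        Finset.mem_filter.2 ⟨Finset.mem_powersetCard.2 ⟨Finset.subset_univ σ', hc'⟩, hs'⟩
      rw [hσeq, Finset.mem_singleton] at hm
      exact hm
    have hfwd : ∀ c σ, c ∈ C → IsSrcOf C D σ c → σ.card = e + 1 →
        IsIncompleteCube C D (cubeAt c σ) σ ∧ IsSource D (cubeAt c σ) σ c := by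
      intro c σ _ hs hcard
      refine ⟨⟨hs.1, isCubeS_cubeAt c σ, ?_, ?_⟩, self_mem_cubeAt c σ, hs.2⟩
      · exact hCmax.shatters (Finset.subset_univ σ) (le_of_eq hcard)
      · intro hsh
        have := hDmax.2.1 σ hsh
        omega
    have hbwd : ∀ c Q σ, IsIncompleteCube C D Q σ → IsSource D Q σ c →
        Q = cubeAt c σ ∧ IsSrcOf C D σ c ∧ σ.card = e + 1 := by
      intro c Q σ hinc hsrc
      obtain ⟨hQC, hQcube, hshC, hshD⟩ := hinc
      obtain ⟨hcQ, htr⟩ := hsrc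
      have hQeq : Q = cubeAt c σ := hQcube.eq_cubeAt hcQ
      have hcard : σ.card = e + 1 := by
        have h1 : σ.card ≤ e + 1 := hCmax.2.1 σ hshC
        have h2 : ¬ (σ.card ≤ e) := fun hle =>
          hshD (hDmax.shatters (Finset.subset_univ σ) hle)
        omega
      exact ⟨hQeq, ⟨hQeq ▸ hQC, htr⟩, hcard⟩
    constructor
    · -- part 1
      intro c hcC hcD
      obtain ⟨σ, ⟨hs, hcard⟩, huniq⟩ := hsig c hcC hcD
      refine ⟨cubeAt c σ, ⟨σ, (hfwd c σ hcC hs hcard).1, (hfwd c σ hcC hs hcard).2⟩, ?_⟩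
      rintro Q ⟨σ', hinc, hsrc⟩
      obtain ⟨hQeq, hs', hcard'⟩ := hbwd c Q σ' hinc hsrc
      rw [hQeq, huniq σ' hs' hcard']
    · -- part 2
      intro r' r hr' hagree hrcond
      have hrc' : ∀ c, c ∈ C → c ∉ D → ∃ σ, IsSrcOf C D σ c ∧ σ.card = e + 1 ∧ r c = σ := by
        intro c hc hcd
        obtain ⟨σ, ⟨hs, hcard⟩, _⟩ := hsig c hc hcd
        exact ⟨σ, hs, hcard,
          hrcond c hc hcd (cubeAt c σ) σ (hfwd c σ hc hs hcard).1 (hfwd c σ hc hs hcard).2⟩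
      obtain ⟨h1', h2', h3', h4'⟩ := hr'
      have hshatD_le : ∀ Y ∈ shatteredSets D, Y.card ≤ e := by
        intro Y hY
        exact hDmax.2.1 Y (Finset.mem_filter.1 hY).2
      have hmemC : ∀ c ∈ C, r c ∈ shatteredSets C := by
        intro c hc
        by_cases hcd : c ∈ D
        · rw [hagree c hcd]
          refine Finset.mem_filter.2 ⟨Finset.mem_univ _, ?_⟩
          exact shatters_mono hDC (Finset.mem_filter.1 (h1' c hcd)).2
        · obtain ⟨σ, _, hcard, hreq⟩ := hrc' c hc hcd
          rw [hreq]
          exact Finset.mem_filter.2 ⟨Finset.mem_univ _,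
            hCmax.shatters (Finset.subset_univ σ) (le_of_eq hcard)⟩
      have hinj : Set.InjOn r ↑C := by
        intro a ha b hb hab
        rw [Finset.mem_coe] at ha hb
        by_cases haD : a ∈ D <;> by_cases hbD : b ∈ D
        · exact h2' (Finset.mem_coe.2 haD) (Finset.mem_coe.2 hbD)
            (by rwa [hagree a haD, hagree b hbD] at hab)
        · exfalso
          obtain ⟨σ, _, hcard, hreq⟩ := hrc' b hb hbD
          have hle := hshatD_le (r' a) (h1' a haD)
          have hra : r' a = σ := by rw [← hagree a haD, hab, hreq]
          rw [hra] at hle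
          omega
        · exfalso
          obtain ⟨σ, _, hcard, hreq⟩ := hrc' a ha haD
          have hle := hshatD_le (r' b) (h1' b hbD)
          have hrb : r' b = σ := by rw [← hagree b hbD, ← hab, hreq]
          rw [hrb] at hle
          omega
        · obtain ⟨σa, hsa, hca, hra⟩ := hrc' a ha haD
          obtain ⟨σb, hsb, hcb, hrb⟩ := hrc' b hb hbD
          have hσ : σa = σb := by rw [← hra, ← hrb, hab]
          subst hσ
          obtain ⟨u, _, huu⟩ := source_exists_unique hCmax hDmax (Finset.subset_univ σa) hca
          exact (huu _ hsa).trans (huu _ hsb).symm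
      have hcardsh : (shatteredSets C).card = C.card := by
        have he : shatteredSets C = (Finset.univ : Finset X).powerset.filter (Shatters C) := by
          rw [shatteredSets, Finset.powerset_univ]
        rw [he]
        exact hCmax.card_shattered
      have hsurj : ∀ Y ∈ shatteredSets C, ∃ c ∈ C, r c = Y := by
        have himg : C.image r = shatteredSets C := by
          apply Finset.eq_of_subset_of_card_le
          · intro y hy
            obtain ⟨c, hc, rfl⟩ := Finset.mem_image.1 hy
            exact hmemC c hc
          · rw [Finset.card_image_of_injOn hinj, hcardsh]
        intro Y hY
        rw [← himg] at hY
        exact Finset.mem_image.1 hY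
      have hnc : NonClashing C r := by
        intro a ha b hb hab
        by_cases haD : a ∈ D <;> by_cases hbD : b ∈ D
        · rw [hagree a haD, hagree b hbD]
          exact h4' a haD b hbD hab
        · obtain ⟨σ, hsb, hcb, hrb⟩ := hrc' b hb hbD
          have hta : a ∩ σ ∈ restrictTo D σ := mem_restrictTo.2 ⟨a, haD, rfl⟩
          have hne : a ∩ σ ≠ b ∩ σ := fun h => hsb.2 (by rw [← h]; exact hta)
          have hσsub : σ ⊆ r a ∪ r b := by rw [hrb]; exact Finset.subset_union_right
          exact trace_ne_of_sub hσsub hne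
        · obtain ⟨σ, hsa, hca, hra⟩ := hrc' a ha haD
          have htb : b ∩ σ ∈ restrictTo D σ := mem_restrictTo.2 ⟨b, hbD, rfl⟩
          have hne : a ∩ σ ≠ b ∩ σ := fun h => hsa.2 (by rw [h]; exact htb)
          have hσsub : σ ⊆ r a ∪ r b := by rw [hra]; exact Finset.subset_union_left
          exact trace_ne_of_sub hσsub hne
        · obtain ⟨σa, hsa, hca, hra⟩ := hrc' a ha haD
          obtain ⟨σb, hsb, hcb, hrb⟩ := hrc' b hb hbD
          rw [hra, hrb]
          exact nonclash_sources (Finset.univ : Finset X).card Finset.univ C D e rfl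
            hCmax hDmax hDC hen a b σa σb hab (Finset.subset_univ _) hca
            (Finset.subset_univ _) hcb hsa hsb
      exact ⟨hmemC, hinj, hsurj, hnc⟩
end

section
/- If C is an ample concept class of VC dimension d and r is a representation map for C, then C admits an unlabeled sample compression scheme of size d. -/
variable {X : Type} [Fintype X] [DecidableEq X]

/-- Key lemma: every realizable sample has a representative whose representing set
lies inside the sample domain. -/
lemma exists_rep_subset (C : Finset (Finset X)) (r : Finset X → Finset X)
    (hr : IsRepMap C r) (Y : Finset X) (c : Finset X) (hc : c ∈ C) :
    ∃ c' ∈ C, c' ∩ Y = c ∩ Y ∧ r c' ⊆ Y := by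
  classical
  obtain ⟨hmem, hinj, hsurj, hnc⟩ := hr
  set S : Finset (Finset X) := C.filter (fun c => r c ⊆ Y) with hS
  set T : Finset (Finset X) := (shatteredSets C).filter (fun Z => Z ⊆ Y) with hT
  set D : Finset (Finset X) := restrictTo C Y with hD
  -- r maps S bijectively onto T
  have himg : S.image r = T := by
    apply Finset.Subset.antisymm
    · intro Z hZ
      obtain ⟨a, ha, rfl⟩ := Finset.mem_image.mp hZ
      rw [hS, Finset.mem_filter] at ha
      exact Finset.mem_filter.mpr ⟨hmem a ha.1, ha.2⟩
    · intro Z hZ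
      rw [hT, Finset.mem_filter] at hZ
      obtain ⟨a, ha, rfl⟩ := hsurj Z hZ.1
      exact Finset.mem_image.mpr ⟨a, Finset.mem_filter.mpr ⟨ha, hZ.2⟩, rfl⟩
  have hScard : S.card = T.card := by
    rw [← himg]
    exact (Finset.card_image_of_injOn (fun a ha b hb =>
      hinj (Finset.mem_filter.mp ha).1 (Finset.mem_filter.mp hb).1)).symm
  -- every set shattered (mathlib sense) by D belongs to T
  have hsub : D.shatterer ⊆ T := by
    intro Z hZ
    rw [Finset.mem_shatterer] at hZ
    have hZY : Z ⊆ Y := by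
      obtain ⟨u, hu, huZ⟩ := hZ (Finset.Subset.refl Z)
      obtain ⟨a, _, rfl⟩ := Finset.mem_image.mp hu
      calc Z = Z ∩ (a ∩ Y) := huZ.symm
        _ ⊆ a ∩ Y := Finset.inter_subset_right
        _ ⊆ Y := Finset.inter_subset_right
    refine Finset.mem_filter.mpr ⟨Finset.mem_filter.mpr ⟨Finset.mem_univ _, ?_⟩, hZY⟩
    intro s hs
    rw [Finset.mem_powerset] at hs
    obtain ⟨u, hu, huZ⟩ := hZ hs
    obtain ⟨a, ha, rfl⟩ := Finset.mem_image.mp hu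
    refine ⟨a, ha, ?_⟩
    calc a ∩ Z = (a ∩ Y) ∩ Z := by
          rw [Finset.inter_assoc, Finset.inter_eq_right.mpr hZY]
      _ = Z ∩ (a ∩ Y) := Finset.inter_comm _ _
      _ = s := huZ
  have hcard : D.card ≤ S.card := by
    calc D.card ≤ D.shatterer.card := Finset.card_le_card_shatterer D
      _ ≤ T.card := Finset.card_le_card hsub
      _ = S.card := hScard.symm
  -- c ↦ c ∩ Y is injective on S
  have hinjS : Set.InjOn (fun a => a ∩ Y) ↑S := by
    intro a ha b hb hab
    by_contra hne
    rw [hS, Finset.mem_coe, Finset.mem_filter] at ha hb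
    apply hnc a ha.1 b hb.1 hne
    have hsub2 : r a ∪ r b ⊆ Y := Finset.union_subset ha.2 hb.2
    calc a ∩ (r a ∪ r b) = a ∩ Y ∩ (r a ∪ r b) := by
          rw [Finset.inter_assoc, Finset.inter_eq_right.mpr hsub2]
      _ = b ∩ Y ∩ (r a ∪ r b) := by rw [show a ∩ Y = b ∩ Y from hab]
      _ = b ∩ (r a ∪ r b) := by
          rw [Finset.inter_assoc, Finset.inter_eq_right.mpr hsub2]
  -- the image of S is all of D
  have himg2 : S.image (fun a => a ∩ Y) = D := by
    apply Finset.eq_of_subset_of_card_le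
    · intro z hz
      obtain ⟨a, ha, rfl⟩ := Finset.mem_image.mp hz
      exact Finset.mem_image.mpr ⟨a, (Finset.mem_filter.mp ha).1, rfl⟩
    · rw [Finset.card_image_of_injOn hinjS]; exact hcard
  have : c ∩ Y ∈ S.image (fun a => a ∩ Y) := by
    rw [himg2]; exact Finset.mem_image.mpr ⟨c, hc, rfl⟩
  obtain ⟨c', hc', hcc⟩ := Finset.mem_image.mp this
  rw [hS, Finset.mem_filter] at hc'
  exact ⟨c', hc'.1, hcc, hc'.2⟩

/-- If `C` is ample of VC dimension `d` and admits a representation map,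
then `C` admits an unlabeled sample compression scheme of size `d`. -/
theorem stmt_15 (C : Finset (Finset X)) (d : ℕ) (hC : IsAmple C) (hd : vcDim C = d)
    (r : Finset X → Finset X) (hr : IsRepMap C r) : HasUSCS C d := by
  classical
  obtain ⟨hmem, hinj, hsurj, hnc⟩ := id hr
  refine ⟨fun Y s => if h : ∃ c', c' ∈ C ∧ c' ∩ Y = s ∧ r c' ⊆ Y then r h.choose else ∅,
    fun A => if h : ∃ c', c' ∈ C ∧ r c' = A then h.choose else ∅, ?_⟩
  intro Y c hc
  have h : ∃ c', c' ∈ C ∧ c' ∩ Y = c ∩ Y ∧ r c' ⊆ Y := by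
    obtain ⟨c', h1, h2, h3⟩ := exists_rep_subset C r hr Y c hc
    exact ⟨c', h1, h2, h3⟩
  obtain ⟨hc'C, hc'Y, hc'r⟩ := h.choose_spec
  simp only [dif_pos h]
  set c₀ := h.choose
  have h2 : ∃ c', c' ∈ C ∧ r c' = r c₀ := ⟨c₀, hc'C, rfl⟩
  obtain ⟨h2C, h2r⟩ := h2.choose_spec
  have heq : h2.choose = c₀ := hinj h2C hc'C h2r
  have hcard : (r c₀).card ≤ d := by
    rw [← hd]
    exact Finset.le_sup (hmem c₀ hc'C)
  refine ⟨hc'r, hcard, ?_, ?_⟩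
  · show (if h : ∃ c', c' ∈ C ∧ r c' = r c₀ then h.choose else ∅) ∈ C
    rw [dif_pos h2]; exact h2C
  · show (if h : ∃ c', c' ∈ C ∧ r c' = r c₀ then h.choose else ∅) ∩ Y = c ∩ Y
    rw [dif_pos h2]; rw [heq, hc'Y]
end
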